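/- arXiv:2307.07810 — 5 statements merged into one kernel-verified Lean document; each statement's English description precedes it below -/
import Mathlib

section
/- Let G be a graph on n vertices and let k, l ≥ 0. A real matrix M with rows indexed by functions I : Fin l → Fin n and columns indexed by J : Fin k → Fin n is Aut(G)-equivariant (i.e., M (σ ∘ I) (σ ∘ J) = M I J for all σ ∈ Aut(G), I, J) if and only if M lies in the ℝ-linear span of the set of G-homomorphism matrices X_𝐇^G, where 𝐇 ranges over all (k,l)-bilabelled graphs (H, 𝐤, 𝐥) with H a graph on Fin m for some m ∈ ℕ. -/
/-- The `G`-homomorphism matrix of a `(k,l)`-bilabelled graph `(H, kt, lt)`: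
the `(I,J)`-entry counts graph homomorphisms `φ : V(H) → Fin n` from `H` to `G`
with `φ ∘ lt = I` and `φ ∘ kt = J`. -/
noncomputable def homMatrix (n : ℕ) (adjG : Fin n → Fin n → Prop)
    {V : Type} [Fintype V] (adjH : V → V → Prop)
    {k l : ℕ} (kt : Fin k → V) (lt : Fin l → V) :
    Matrix (Fin l → Fin n) (Fin k → Fin n) ℝ :=
  Matrix.of fun I J =>
    (Nat.card {φ : V → Fin n //
      (∀ u v, adjH u v → adjG (φ u) (φ v)) ∧ φ ∘ lt = I ∧ φ ∘ kt = J} : ℝ)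

open scoped Classical

namespace HomSpan

variable (n k l : ℕ) (adjG : Fin n → Fin n → Prop)

/-- The injective-homomorphism matrix. -/
noncomputable def injHomMatrix {V : Type} [Fintype V] (adjH : V → V → Prop)
    (kt : Fin k → V) (lt : Fin l → V) :
    Matrix (Fin l → Fin n) (Fin k → Fin n) ℝ :=
  Matrix.of fun I J =>
    (Nat.card {φ : V → Fin n // Function.Injective φ ∧
      (∀ u v, adjH u v → adjG (φ u) (φ v)) ∧ φ ∘ lt = I ∧ φ ∘ kt = J} : ℝ)

/-- The spanning set from the statement. -/
def homSet : Set (Matrix (Fin l → Fin n) (Fin k → Fin n) ℝ) :=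
  {X | ∃ (m : ℕ) (adjH : Fin m → Fin m → Prop),
          (∀ u v, adjH u v → adjH v u) ∧
          ∃ (kt : Fin k → Fin m) (lt : Fin l → Fin m),
            X = homMatrix n adjG adjH kt lt}

/-- relabelling invariance of homMatrix -/
theorem homMatrix_relabel {V W : Type} [Fintype V] [Fintype W] (e : V ≃ W)
    (adjH : V → V → Prop) (kt : Fin k → V) (lt : Fin l → V) :
    homMatrix n adjG adjH kt lt
      = homMatrix n adjG (fun u v => adjH (e.symm u) (e.symm v))
          (fun i => e (kt i)) (fun i => e (lt i)) := by
  ext I J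
  simp only [homMatrix, Matrix.of_apply]
  congr 1
  apply Nat.card_congr
  refine Equiv.subtypeEquiv (Equiv.arrowCongr e (Equiv.refl (Fin n))) ?_
  intro φ
  simp only [Equiv.arrowCongr_apply, Equiv.refl_apply, Function.comp_def, Equiv.coe_refl,
    id_eq, Equiv.symm_apply_apply]
  constructor
  · rintro ⟨h1, h2, h3⟩
    exact ⟨fun u v h => h1 _ _ h, by funext i; simpa using congrFun h2 i,
      by funext i; simpa using congrFun h3 i⟩
  · rintro ⟨h1, h2, h3⟩
    refine ⟨fun u v h => by simpa using h1 (e u) (e v) (by simpa using h), ?_, ?_⟩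
    · funext i; simpa using congrFun h2 i
    · funext i; simpa using congrFun h3 i

theorem injHomMatrix_relabel {V W : Type} [Fintype V] [Fintype W] (e : V ≃ W)
    (adjH : V → V → Prop) (kt : Fin k → V) (lt : Fin l → V) :
    injHomMatrix n k l adjG adjH kt lt
      = injHomMatrix n k l adjG (fun u v => adjH (e.symm u) (e.symm v))
          (fun i => e (kt i)) (fun i => e (lt i)) := by
  ext I J
  simp only [injHomMatrix, Matrix.of_apply]
  congr 1
  apply Nat.card_congr
  refine Equiv.subtypeEquiv (Equiv.arrowCongr e (Equiv.refl (Fin n))) ?_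
  intro φ
  simp only [Equiv.arrowCongr_apply, Equiv.refl_apply, Function.comp_def, Equiv.coe_refl,
    id_eq, Equiv.symm_apply_apply]
  constructor
  · rintro ⟨hi, h1, h2, h3⟩
    exact ⟨(Equiv.injective_comp e.symm _).mpr hi, fun u v h => h1 _ _ h, by funext i; simpa using congrFun h2 i,
      by funext i; simpa using congrFun h3 i⟩
  · rintro ⟨hi, h1, h2, h3⟩
    refine ⟨fun a b hab => e.injective (hi (show φ (e.symm (e a)) = φ (e.symm (e b)) by
        simpa using hab)), fun u v h => by simpa using h1 (e u) (e v) (by simpa using h), ?_, ?_⟩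
    · funext i; simpa using congrFun h2 i
    · funext i; simpa using congrFun h3 i

noncomputable instance setoidFintype (V : Type) [Fintype V] : Fintype (Setoid V) :=
  Fintype.ofInjective (fun s => (fun u v => decide (s.r u v) : V → V → Bool))
    (by
      intro s t h
      apply Setoid.ext
      intro a b
      have := congrFun (congrFun h a) b
      simpa using this)

/-- quotient adjacency -/
def adjQ {V : Type} (adjH : V → V → Prop) (r : Setoid V) :
    Quotient r → Quotient r → Prop :=
  fun a b => ∃ u v, adjH u v ∧ Quotient.mk r u = a ∧ Quotient.mk r v = b

/-- the key counting identity -/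
theorem nat_card_sigma {R : Type} [Fintype R] (g : R → Type) [∀ r, Finite (g r)] :
    Nat.card (Σ r, g r) = ∑ r, Nat.card (g r) := by
  letI : ∀ r, Fintype (g r) := fun r => Fintype.ofFinite _
  simp [Nat.card_eq_fintype_card, Fintype.card_sigma]

theorem homMatrix_eq_sum {V : Type} [Fintype V]
    (adjH : V → V → Prop) (kt : Fin k → V) (lt : Fin l → V) :
    homMatrix n adjG adjH kt lt =
      ∑ r : Setoid V,
        injHomMatrix n k l adjG (adjQ adjH r)
          (fun i => Quotient.mk r (kt i)) (fun i => Quotient.mk r (lt i)) := by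
  ext I J
  simp only [homMatrix, injHomMatrix, Matrix.of_apply, Matrix.sum_apply]
  rw [← Nat.cast_sum]
  congr 1
  have h1 : Nat.card {φ : V → Fin n //
      (∀ u v, adjH u v → adjG (φ u) (φ v)) ∧ φ ∘ lt = I ∧ φ ∘ kt = J}
      = ∑ r : Setoid V, Nat.card {x : {φ : V → Fin n //
      (∀ u v, adjH u v → adjG (φ u) (φ v)) ∧ φ ∘ lt = I ∧ φ ∘ kt = J} //
        Setoid.ker x.1 = r} := by
    rw [Nat.card_congr (Equiv.sigmaFiberEquiv
        (fun x : {φ : V → Fin n //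
          (∀ u v, adjH u v → adjG (φ u) (φ v)) ∧ φ ∘ lt = I ∧ φ ∘ kt = J} =>
            Setoid.ker x.1)).symm, nat_card_sigma]
  rw [h1]
  refine Finset.sum_congr rfl fun r _ => ?_
  apply Nat.card_congr
  refine
    { toFun := fun x =>
        ⟨Quotient.lift x.1.1 (fun a b hab => by
            have hx := x.2
            rw [← hx] at hab
            exact hab), ?_, ?_, ?_, ?_⟩
      invFun := fun y =>
        ⟨⟨y.1 ∘ Quotient.mk r, ?_, ?_, ?_⟩, ?_⟩
      left_inv := ?_
      right_inv := ?_ }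
  · intro a b
    refine Quotient.inductionOn₂ a b fun u v huv => ?_
    refine Quotient.sound ?_
    have hx := x.2
    rw [← hx]
    exact huv
  · rintro a b ⟨u, v, huv, rfl, rfl⟩
    exact x.1.2.1 u v huv
  · funext i
    exact congrFun x.1.2.2.1 i
  · funext i
    exact congrFun x.1.2.2.2 i
  · intro u v huv
    exact y.2.2.1 _ _ ⟨u, v, huv, rfl, rfl⟩
  · funext i
    exact congrFun y.2.2.2.1 i
  · funext i
    exact congrFun y.2.2.2.2 i
  · apply Setoid.ext
    intro a b
    constructor
    · intro hab
      exact Quotient.exact (y.2.1 hab)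
    · intro hab
      exact congrArg y.1 (Quotient.sound hab)
  · intro x
    exact Subtype.ext (Subtype.ext (funext fun v => rfl))
  · intro y
    exact Subtype.ext (funext fun a => Quotient.inductionOn a fun v => rfl)

/-- injective hom matrices are in the span -/
theorem homMatrix_mem_span {V : Type} [Fintype V]
    (adjH : V → V → Prop) (hsym : ∀ u v, adjH u v → adjH v u)
    (kt : Fin k → V) (lt : Fin l → V) :
    homMatrix n adjG adjH kt lt ∈ Submodule.span ℝ (homSet n k l adjG) := by
  apply Submodule.subset_span
  exact ⟨Fintype.card V,
    fun u v => adjH ((Fintype.equivFin V).symm u) ((Fintype.equivFin V).symm v),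
    fun u v h => hsym _ _ h,
    fun i => (Fintype.equivFin V) (kt i), fun i => (Fintype.equivFin V) (lt i),
    homMatrix_relabel n k l adjG (Fintype.equivFin V) adjH kt lt⟩

/-- The quotient by the bottom setoid gives back the same matrix. -/
theorem injHomMatrix_bot {V : Type} [Fintype V]
    (adjH : V → V → Prop) (kt : Fin k → V) (lt : Fin l → V) :
    injHomMatrix n k l adjG (adjQ adjH (Setoid.ker (id : V → V)))
        (fun i => Quotient.mk _ (kt i)) (fun i => Quotient.mk _ (lt i))
      = injHomMatrix n k l adjG adjH kt lt := by
  set r0 : Setoid V := Setoid.ker (id : V → V) with hr0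
  let e : Quotient r0 ≃ V :=
    { toFun := Quotient.lift id fun a b h => h
      invFun := Quotient.mk r0
      left_inv := fun q => Quotient.inductionOn q fun v => rfl
      right_inv := fun v => rfl }
  rw [injHomMatrix_relabel n k l adjG e]
  have hadj : (fun u v => adjQ adjH r0 (e.symm u) (e.symm v)) = adjH := by
    funext u v
    apply propext
    constructor
    · rintro ⟨u', v', h, hu, hv⟩
      have hu' : u' = u := Quotient.exact hu
      have hv' : v' = v := Quotient.exact hv
      rwa [hu', hv'] at h
    · intro h
      exact ⟨u, v, h, rfl, rfl⟩
  rw [hadj]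
  rfl

theorem injHomMatrix_mem_span :
    ∀ (N : ℕ) (V : Type) [Fintype V], Fintype.card V ≤ N →
      ∀ (adjH : V → V → Prop), (∀ u v, adjH u v → adjH v u) →
      ∀ (kt : Fin k → V) (lt : Fin l → V),
      injHomMatrix n k l adjG adjH kt lt ∈ Submodule.span ℝ (homSet n k l adjG) := by
  intro N
  induction N with
  | zero =>
    intro V _ hV adjH hsym kt lt
    haveI : IsEmpty V := Fintype.card_eq_zero_iff.mp (by omega)
    have heq : injHomMatrix n k l adjG adjH kt lt = homMatrix n adjG adjH kt lt := by
      ext I J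
      simp only [injHomMatrix, homMatrix, Matrix.of_apply]
      congr 1
      apply Nat.card_congr
      refine Equiv.subtypeEquiv (Equiv.refl _) fun φ => ?_
      simp only [Equiv.refl_apply]
      exact ⟨fun h => h.2, fun h => ⟨fun a b _ => isEmptyElim a, h⟩⟩
    rw [heq]
    exact homMatrix_mem_span n k l adjG adjH hsym kt lt
  | succ N ih =>
    intro V _ hV adjH hsym kt lt
    by_cases hc : Fintype.card V ≤ N
    · exact ih V hc adjH hsym kt lt
    set r0 : Setoid V := Setoid.ker (id : V → V) with hr0def
    have key := homMatrix_eq_sum n k l adjG adjH kt lt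
    rw [← Finset.add_sum_erase (Finset.univ) _ (Finset.mem_univ r0)] at key
    have hbot := injHomMatrix_bot n k l adjG adjH kt lt
    have hmain : injHomMatrix n k l adjG adjH kt lt
        = homMatrix n adjG adjH kt lt
          - ∑ r ∈ Finset.univ.erase r0,
              injHomMatrix n k l adjG (adjQ adjH r)
                (fun i => Quotient.mk r (kt i)) (fun i => Quotient.mk r (lt i)) := by
      rw [key, ← hbot]
      abel
    rw [hmain]
    apply Submodule.sub_mem
    · exact homMatrix_mem_span n k l adjG adjH hsym kt lt
    · apply Submodule.sum_mem
      intro r hr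
      have hrne : r ≠ r0 := Finset.ne_of_mem_erase hr
      letI : Fintype (Quotient r) := Fintype.ofFinite _
      have hlt : Fintype.card (Quotient r) < Fintype.card V := by
        apply Fintype.card_lt_of_surjective_not_injective (Quotient.mk r)
        · intro q
          exact Quotient.inductionOn q fun v => ⟨v, rfl⟩
        · intro hinj
          apply hrne
          apply Setoid.ext
          intro a b
          constructor
          · intro hab
            exact hinj (Quotient.sound hab)
          · intro hab
            cases hab
            exact Setoid.refl a
      have hsymQ : ∀ u v, adjQ adjH r u v → adjQ adjH r v u := by
        rintro u v ⟨u', v', h, hu, hv⟩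
        exact ⟨v', u', hsym _ _ h, hv, hu⟩
      exact ih (Quotient r) (by omega) (adjQ adjH r) hsymQ _ _

theorem homMatrix_equivariant (σ : Equiv.Perm (Fin n))
    (hσ : ∀ i j, adjG i j ↔ adjG (σ i) (σ j)) {V : Type} [Fintype V]
    (adjH : V → V → Prop) (kt : Fin k → V) (lt : Fin l → V)
    (I : Fin l → Fin n) (J : Fin k → Fin n) :
    homMatrix n adjG adjH kt lt (⇑σ ∘ I) (⇑σ ∘ J) = homMatrix n adjG adjH kt lt I J := by
  have hiff : ∀ a b, adjG (σ.symm a) (σ.symm b) ↔ adjG a b := by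
    intro a b
    have := hσ (σ.symm a) (σ.symm b)
    simp only [Equiv.apply_symm_apply] at this
    exact this
  simp only [homMatrix, Matrix.of_apply]
  congr 1
  apply Nat.card_congr
  refine Equiv.subtypeEquiv (Equiv.arrowCongr (Equiv.refl V) σ.symm) fun φ => ?_
  simp only [Equiv.arrowCongr_apply, Equiv.coe_refl, Function.comp_def, id_eq]
  constructor
  · rintro ⟨h1, h2, h3⟩
    refine ⟨fun u v h => (hiff _ _).mpr (h1 u v h), ?_, ?_⟩
    · funext i
      have := congrFun h2 i
      simp [this]
    · funext i
      have := congrFun h3 i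
      simp [this]
  · rintro ⟨h1, h2, h3⟩
    refine ⟨fun u v h => (hiff _ _).mp ?_, ?_, ?_⟩
    · simpa using h1 u v h
    · funext i
      have := congrFun h2 i
      simp only [Function.comp_apply, ← this, Equiv.apply_symm_apply]
      rfl
    · funext i
      have := congrFun h3 i
      simp only [Function.comp_apply, ← this, Equiv.apply_symm_apply]
      rfl

theorem perm_hom_refl (σ : Equiv.Perm (Fin n))
    (hhom : ∀ i j, adjG i j → adjG (σ i) (σ j)) :
    ∀ i j, adjG (σ i) (σ j) → adjG i j := by
  have hpow : ∀ m : ℕ, ∀ i j, adjG i j → adjG ((σ ^ m) i) ((σ ^ m) j) := by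
    intro m
    induction m with
    | zero => intro i j h; simpa using h
    | succ m ihm =>
      intro i j h
      have := ihm (σ i) (σ j) (hhom i j h)
      simpa [pow_succ, Equiv.Perm.mul_apply] using this
  intro i j h
  have ho : 1 ≤ orderOf σ := orderOf_pos σ
  have key : ∀ x, (σ ^ (orderOf σ - 1)) (σ x) = x := by
    intro x
    have : (σ ^ (orderOf σ - 1)) (σ x) = (σ ^ (orderOf σ - 1) * σ) x := rfl
    rw [this, ← pow_succ, Nat.sub_add_cancel ho, pow_orderOf_eq_one]
    rfl
  have := hpow (orderOf σ - 1) (σ i) (σ j) h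
  rwa [key, key] at this

end HomSpan

/-- A matrix is `Aut(G)`-equivariant if and only if it lies in the
ℝ-linear span of the `G`-homomorphism matrices of all `(k,l)`-bilabelled
graphs (with underlying graph on `Fin m` for some `m`). -/
theorem equivariant_iff_mem_span_homMatrices
    (n k l : ℕ) (adjG : Fin n → Fin n → Prop)
    (hG : ∀ i j, adjG i j → adjG j i)
    (M : Matrix (Fin l → Fin n) (Fin k → Fin n) ℝ) :
    (∀ σ : Equiv.Perm (Fin n), (∀ i j, adjG i j ↔ adjG (σ i) (σ j)) →
      ∀ (I : Fin l → Fin n) (J : Fin k → Fin n), M (⇑σ ∘ I) (⇑σ ∘ J) = M I J) ↔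
    M ∈ Submodule.span ℝ
      {X : Matrix (Fin l → Fin n) (Fin k → Fin n) ℝ |
        ∃ (m : ℕ) (adjH : Fin m → Fin m → Prop),
          (∀ u v, adjH u v → adjH v u) ∧
          ∃ (kt : Fin k → Fin m) (lt : Fin l → Fin m),
            X = homMatrix n adjG adjH kt lt} := by
  constructor
  · -- hard direction: equivariant → in span
    intro hM
    classical
    set Aut : Finset (Equiv.Perm (Fin n)) :=
      Finset.univ.filter (fun σ => ∀ i j, adjG i j ↔ adjG (σ i) (σ j)) with hAutdef
    clear_value Aut
    have h1Aut : (1 : Equiv.Perm (Fin n)) ∈ Aut := by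
      simp [hAutdef]
    have hcne : (Aut.card : ℝ) ≠ 0 := by
      have : 0 < Aut.card := Finset.card_pos.mpr ⟨1, h1Aut⟩
      positivity
    have hAutmem : ∀ σ : Equiv.Perm (Fin n), σ ∈ Aut →
        ∀ i j, adjG i j ↔ adjG (σ i) (σ j) := by
      intro σ hσ
      rw [hAutdef] at hσ
      simpa using (Finset.mem_filter.mp hσ).2
    -- the "automorphism orbit count" matrix equals an injective hom matrix
    have hA : ∀ (I₀ : Fin l → Fin n) (J₀ : Fin k → Fin n) (I : Fin l → Fin n)
        (J : Fin k → Fin n),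
        HomSpan.injHomMatrix n k l adjG adjG J₀ I₀ I J
          = ((Aut.filter (fun σ : Equiv.Perm (Fin n) =>
              J₀ = ⇑σ.symm ∘ J ∧ I₀ = ⇑σ.symm ∘ I)).card : ℝ) := by
      intro I₀ J₀ I J
      simp only [HomSpan.injHomMatrix, Matrix.of_apply]
      congr 1
      rw [hAutdef, Finset.filter_filter, ← Fintype.card_subtype, ← Nat.card_eq_fintype_card]
      apply Nat.card_congr
      have hcnd : ∀ (σ : Equiv.Perm (Fin n)),
          ((⇑σ ∘ I₀ = I) ↔ (I₀ = ⇑σ.symm ∘ I)) ∧ ((⇑σ ∘ J₀ = J) ↔ (J₀ = ⇑σ.symm ∘ J)) := by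
        intro σ
        constructor
        · constructor
          · intro h; funext i; rw [← h]; simp
          · intro h; funext i; rw [h]; simp
        · constructor
          · intro h; funext i; rw [← h]; simp
          · intro h; funext i; rw [h]; simp
      refine
        { toFun := fun x =>
            ⟨Equiv.ofBijective x.1 ((Finite.injective_iff_bijective).mp x.2.1),
              ⟨fun i j => ⟨fun h => x.2.2.1 i j h,
                fun h => HomSpan.perm_hom_refl n adjG
                  (Equiv.ofBijective x.1 ((Finite.injective_iff_bijective).mp x.2.1))
                  (fun i j hij => x.2.2.1 i j hij) i j h⟩,
               ((hcnd _).2).mp x.2.2.2.2, ((hcnd _).1).mp x.2.2.2.1⟩⟩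
          invFun := fun y =>
            ⟨⇑y.1, y.1.injective, fun i j h => (y.2.1 i j).mp h,
              ((hcnd _).1).mpr y.2.2.2, ((hcnd _).2).mpr y.2.2.1⟩
          left_inv := fun x => Subtype.ext rfl
          right_inv := fun y => Subtype.ext (Equiv.ext fun x => rfl) }
    -- averaging decomposition
    have hMdecomp : M = ∑ I₀ : Fin l → Fin n, ∑ J₀ : Fin k → Fin n,
        (M I₀ J₀ / (Aut.card : ℝ)) • HomSpan.injHomMatrix n k l adjG adjG J₀ I₀ := by
      ext I J
      simp only [Matrix.sum_apply, Matrix.smul_apply, smul_eq_mul]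
      have step1 : ∀ (I₀ : Fin l → Fin n) (J₀ : Fin k → Fin n),
          M I₀ J₀ / (Aut.card : ℝ) * HomSpan.injHomMatrix n k l adjG adjG J₀ I₀ I J
            = ∑ σ ∈ Aut, (M I₀ J₀ / (Aut.card : ℝ)) *
                (if J₀ = ⇑σ.symm ∘ J ∧ I₀ = ⇑σ.symm ∘ I then 1 else 0) := by
        intro I₀ J₀
        rw [hA, Finset.card_filter, Nat.cast_sum, Finset.mul_sum]
        refine Finset.sum_congr rfl fun σ _ => ?_
        split_ifs <;> simp
      simp only [step1]
      have swap1 : ∀ I₀ : Fin l → Fin n,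
          (∑ J₀ : Fin k → Fin n, ∑ σ ∈ Aut, (M I₀ J₀ / (Aut.card : ℝ)) *
              (if J₀ = ⇑σ.symm ∘ J ∧ I₀ = ⇑σ.symm ∘ I then 1 else 0))
          = ∑ σ ∈ Aut, ∑ J₀ : Fin k → Fin n, (M I₀ J₀ / (Aut.card : ℝ)) *
              (if J₀ = ⇑σ.symm ∘ J ∧ I₀ = ⇑σ.symm ∘ I then 1 else 0) :=
        fun I₀ => Finset.sum_comm
      simp only [swap1]
      rw [Finset.sum_comm]
      have inner : ∀ σ ∈ Aut,
          (∑ I₀ : Fin l → Fin n, ∑ J₀ : Fin k → Fin n, (M I₀ J₀ / (Aut.card : ℝ)) *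
              (if J₀ = ⇑σ.symm ∘ J ∧ I₀ = ⇑σ.symm ∘ I then 1 else 0))
            = M I J / (Aut.card : ℝ) := by
        intro σ hσ
        have heq : M (⇑σ.symm ∘ I) (⇑σ.symm ∘ J) = M I J := by
          have h1 := hM σ (hAutmem σ hσ) (⇑σ.symm ∘ I) (⇑σ.symm ∘ J)
          have h2 : ⇑σ ∘ (⇑σ.symm ∘ I) = I := by funext i; simp
          have h3 : ⇑σ ∘ (⇑σ.symm ∘ J) = J := by funext i; simp
          rw [h2, h3] at h1
          exact h1.symm
        simp only [mul_ite, mul_one, mul_zero, ite_and]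
        simp only [Finset.sum_ite_eq', Finset.mem_univ, if_true]
        rw [heq]
      rw [Finset.sum_congr rfl inner, Finset.sum_const, nsmul_eq_mul,
        mul_div_cancel₀ _ hcne]
    rw [hMdecomp]
    apply Submodule.sum_mem
    intro I₀ _
    apply Submodule.sum_mem
    intro J₀ _
    apply Submodule.smul_mem
    exact HomSpan.injHomMatrix_mem_span n k l adjG n (Fin n) (by simp) adjG
      (fun i j h => hG i j h) J₀ I₀
  · -- easy direction: span → equivariant
    intro hM
    let E : Submodule ℝ (Matrix (Fin l → Fin n) (Fin k → Fin n) ℝ) :=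
      { carrier := {X | ∀ σ : Equiv.Perm (Fin n), (∀ i j, adjG i j ↔ adjG (σ i) (σ j)) →
          ∀ (I : Fin l → Fin n) (J : Fin k → Fin n), X (⇑σ ∘ I) (⇑σ ∘ J) = X I J}
        add_mem' := fun ha hb σ hσ I J => by
          simp only [Matrix.add_apply]
          rw [ha σ hσ I J, hb σ hσ I J]
        zero_mem' := fun σ hσ I J => rfl
        smul_mem' := fun c X hX σ hσ I J => by
          simp only [Matrix.smul_apply]
          rw [hX σ hσ I J] }
    have : M ∈ E := by
      refine Submodule.span_le.mpr ?_ hM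
      rintro X ⟨m, adjH, hsym, kt, lt, rfl⟩
      intro σ hσ I J
      exact HomSpan.homMatrix_equivariant n k l adjG σ hσ adjH kt lt I J
    exact this
end

section
/- Let G be a graph on n vertices, let 𝐇₁ = (H₁, 𝐤, 𝐥) be a (k,l)-bilabelled graph and 𝐇₂ = (H₂, 𝐪, 𝐦) be a (q,m)-bilabelled graph, and let 𝐇₁ ⊗ 𝐇₂ be the (k+q, l+m)-bilabelled graph whose underlying graph is the disjoint union H₁ ⊔ H₂ (vertex set V(H₁) ⊕ V(H₂), with adjacency inherited from H₁ and H₂ on each summand and no edges between the summands), with input tuple the concatenation of 𝐤 and 𝐪 (composed with the summand inclusions) and output tuple the concatenation of 𝐥 and 𝐦. Then, under the identification of (Fin (l+m) → Fin n) with (Fin l → Fin n) × (Fin m → Fin n) and of (Fin (k+q) → Fin n) with (Fin k → Fin n) × (Fin q → Fin n) given by Fin.append, the Kronecker product X_{𝐇₁}^G ⊗ X_{𝐇₂}^G equals X_{𝐇₁ ⊗ 𝐇₂}^G. -/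
lemma comp_append_aux {α β : Type} {a b : ℕ} (f : α → β) (x : Fin a → α) (y : Fin b → α) :
    f ∘ Fin.append x y = Fin.append (f ∘ x) (f ∘ y) := by
  funext i
  refine Fin.addCases (fun i => ?_) (fun i => ?_) i <;>
    simp [Fin.append_left, Fin.append_right]

lemma append_inj_aux {α : Type} {a b : ℕ} {x x' : Fin a → α} {y y' : Fin b → α}
    (h : Fin.append x y = Fin.append x' y') : x = x' ∧ y = y' := by
  constructor
  · funext i; have := congrFun h (Fin.castAdd b i); simpa [Fin.append_left] using this
  · funext i; have := congrFun h (Fin.natAdd a i); simpa [Fin.append_right] using this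

/-- The Kronecker product of the `G`-homomorphism matrices of two
bilabelled graphs is the `G`-homomorphism matrix of their tensor product (the
disjoint union of the underlying graphs, with concatenated tuples), under the
`Fin.append` identification of index sets. -/
theorem homMatrix_kronecker
    (n : ℕ) (adjG : Fin n → Fin n → Prop)
    (hG : ∀ i j, adjG i j → adjG j i)
    {V₁ V₂ : Type} [Fintype V₁] [Fintype V₂]
    (adjH₁ : V₁ → V₁ → Prop) (h₁ : ∀ u v, adjH₁ u v → adjH₁ v u)
    (adjH₂ : V₂ → V₂ → Prop) (h₂ : ∀ u v, adjH₂ u v → adjH₂ v u)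
    {k l q m : ℕ} (kt : Fin k → V₁) (lt : Fin l → V₁)
    (qt : Fin q → V₂) (mt : Fin m → V₂)
    (I₁ : Fin l → Fin n) (I₂ : Fin m → Fin n)
    (J₁ : Fin k → Fin n) (J₂ : Fin q → Fin n) :
    Matrix.kroneckerMap (· * ·)
      (homMatrix n adjG adjH₁ kt lt) (homMatrix n adjG adjH₂ qt mt)
      (I₁, I₂) (J₁, J₂) =
    homMatrix n adjG
      (fun u v : V₁ ⊕ V₂ =>
        match u, v with
        | Sum.inl a, Sum.inl b => adjH₁ a b
        | Sum.inr a, Sum.inr b => adjH₂ a b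
        | _, _ => False)
      (Fin.append (fun i => Sum.inl (kt i)) (fun i => Sum.inr (qt i)))
      (Fin.append (fun i => Sum.inl (lt i)) (fun i => Sum.inr (mt i)))
      (Fin.append I₁ I₂) (Fin.append J₁ J₂) := by
  simp only [Matrix.kroneckerMap, homMatrix, Matrix.of_apply]
  rw [← Nat.cast_mul, ← Nat.card_prod]
  congr 1
  apply Nat.card_congr
  refine ⟨fun p => ⟨Sum.elim p.1.1 p.2.1, ?_, ?_, ?_⟩,
    fun φ => ⟨⟨φ.1 ∘ Sum.inl, ?_, ?_, ?_⟩, ⟨φ.1 ∘ Sum.inr, ?_, ?_, ?_⟩⟩, ?_, ?_⟩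
  · rintro (u|u) (v|v) h <;> simp_all
    exacts [p.1.2.1 u v h, p.2.2.1 u v h]
  · rw [comp_append_aux]
    have e1 : (Sum.elim p.1.1 p.2.1 ∘ fun i => Sum.inl (lt i)) = I₁ := by
      funext i; exact congrFun p.1.2.2.1 i
    have e2 : (Sum.elim p.1.1 p.2.1 ∘ fun i => Sum.inr (mt i)) = I₂ := by
      funext i; exact congrFun p.2.2.2.1 i
    rw [e1, e2]
  · rw [comp_append_aux]
    have e1 : (Sum.elim p.1.1 p.2.1 ∘ fun i => Sum.inl (kt i)) = J₁ := by
      funext i; exact congrFun p.1.2.2.2 i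
    have e2 : (Sum.elim p.1.1 p.2.1 ∘ fun i => Sum.inr (qt i)) = J₂ := by
      funext i; exact congrFun p.2.2.2.2 i
    rw [e1, e2]
  · exact fun u v h => φ.2.1 (Sum.inl u) (Sum.inl v) h
  · obtain ⟨h', hl, hk⟩ := φ.2
    rw [comp_append_aux] at hl
    funext i
    have := congrFun hl (Fin.castAdd m i)
    simpa [Fin.append_left] using this
  · obtain ⟨h', hl, hk⟩ := φ.2
    rw [comp_append_aux] at hk
    funext i
    have := congrFun hk (Fin.castAdd q i)
    simpa [Fin.append_left] using this
  · exact fun u v h => φ.2.1 (Sum.inr u) (Sum.inr v) h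
  · obtain ⟨h', hl, hk⟩ := φ.2
    rw [comp_append_aux] at hl
    funext i
    have := congrFun hl (Fin.natAdd l i)
    simpa [Fin.append_right] using this
  · obtain ⟨h', hl, hk⟩ := φ.2
    rw [comp_append_aux] at hk
    funext i
    have := congrFun hk (Fin.natAdd k i)
    simpa [Fin.append_right] using this
  · rintro ⟨⟨φ₁, _⟩, ⟨φ₂, _⟩⟩
    simp only [Subtype.mk.injEq, Prod.mk.injEq]
    constructor <;> rfl
  · rintro ⟨φ, _⟩
    simp only [Subtype.mk.injEq]
    funext u; cases u <;> rfl
end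

section
/- Let n, k, l ≥ 0. For a set partition P of Fin (l+k), let B_P be the real matrix with rows indexed by I : Fin l → Fin n and columns indexed by J : Fin k → Fin n whose (I,J)-entry is 1 if the appended tuple Fin.append I J : Fin (l+k) → Fin n is constant on every block of P, and 0 otherwise. Then the family of matrices B_P, as P ranges over the set partitions of Fin (l+k) with at most n blocks, is a basis of the ℝ-vector space of S_n-equivariant matrices, i.e., of the matrices M satisfying M (σ ∘ I) (σ ∘ J) = M I J for every permutation σ of Fin n and all I, J: these B_P are linearly independent, and every S_n-equivariant matrix lies in their span. -/
open scoped Classical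

/-- The diagram-basis matrix `B_P` attached to a set partition `P` of
`Fin (l+k)`: its `(I,J)`-entry is `1` if `Fin.append I J` is constant on every
block of `P`, and `0` otherwise. -/
noncomputable def diagramMatrix (n k l : ℕ)
    (P : Finpartition (Finset.univ : Finset (Fin (l + k)))) :
    Matrix (Fin l → Fin n) (Fin k → Fin n) ℝ :=
  Matrix.of fun I J =>
    if ∀ B ∈ P.parts, ∀ x ∈ B, ∀ y ∈ B, Fin.append I J x = Fin.append I J y
    then 1 else 0

namespace DiagramBasisAux

open Finset

variable {α : Type*} [Fintype α] [DecidableEq α] {n : ℕ}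

/-- The kernel partition of a map `f : α → Fin n`. -/
noncomputable def kerP (f : α → Fin n) : Finpartition (Finset.univ : Finset α) :=
  Finpartition.ofSetoid (Setoid.ker f)

lemma mem_part_kerP {f : α → Fin n} {x y : α} : y ∈ (kerP f).part x ↔ f x = f y :=
  Finpartition.mem_part_ofSetoid_iff_rel

lemma parts_eq_image_part (P : Finpartition (Finset.univ : Finset α)) :
    P.parts = univ.image P.part := by
  ext b
  constructor
  · intro hb
    obtain ⟨x, hx⟩ := P.nonempty_of_mem_parts hb
    exact mem_image.2 ⟨x, mem_univ x, P.part_eq_of_mem hb hx⟩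
  · intro hb
    obtain ⟨x, -, rfl⟩ := mem_image.1 hb
    exact P.part_mem.2 (mem_univ x)

lemma part_kerP (f : α → Fin n) (x : α) :
    (kerP f).part x = univ.filter (fun y => f x = f y) := by
  ext y
  simp [mem_part_kerP]

lemma card_kerP (f : α → Fin n) : (kerP f).parts.card ≤ n := by
  rw [parts_eq_image_part]
  have h : (kerP f).part = (fun c => univ.filter (fun y => c = f y)) ∘ f :=
    funext fun x => part_kerP f x
  rw [h, ← Finset.image_image]
  calc ((univ.image f).image _).card
      ≤ (univ.image f).card := Finset.card_image_le
    _ ≤ Fintype.card (Fin n) := Finset.card_le_univ _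
    _ = n := Fintype.card_fin n

lemma const_iff_le {P : Finpartition (Finset.univ : Finset α)} {f : α → Fin n} :
    (∀ B ∈ P.parts, ∀ x ∈ B, ∀ y ∈ B, f x = f y) ↔ P ≤ kerP f := by
  constructor
  · intro h b hb
    obtain ⟨x, hx⟩ := P.nonempty_of_mem_parts hb
    refine ⟨(kerP f).part x, (kerP f).part_mem.2 (mem_univ x), fun y hy => ?_⟩
    exact mem_part_kerP.2 (h b hb x hx y hy)
  · intro h B hB x hx y hy
    obtain ⟨c, hc, hBc⟩ := h hB
    rw [parts_eq_image_part] at hc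
    obtain ⟨a, -, rfl⟩ := mem_image.1 hc
    have hx' : f a = f x := mem_part_kerP.1 (hBc hx)
    have hy' : f a = f y := mem_part_kerP.1 (hBc hy)
    rw [← hx', hy']

lemma rel_of_kerP_eq {f g : α → Fin n} (h : kerP f = kerP g) (x y : α) :
    f x = f y ↔ g x = g y := by
  rw [← mem_part_kerP (f := f), ← mem_part_kerP (f := g), h]

lemma kerP_eq_of_rel {f g : α → Fin n} (h : ∀ x y, f x = f y ↔ g x = g y) :
    kerP f = kerP g := by
  have hpart : (kerP f).part = (kerP g).part := by
    funext x
    rw [part_kerP, part_kerP]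
    exact Finset.filter_congr fun y _ => by rw [h]
  ext b
  rw [parts_eq_image_part (kerP f), parts_eq_image_part (kerP g), hpart]

lemma kerP_eq_of_rel_part {f : α → Fin n} {Q : Finpartition (Finset.univ : Finset α)}
    (h : ∀ x y, f x = f y ↔ Q.part x = Q.part y) : kerP f = Q := by
  have hpart : ∀ x, (kerP f).part x = Q.part x := by
    intro x
    ext y
    rw [mem_part_kerP, h,
      Q.mem_part_iff_part_eq_part (mem_univ y) (mem_univ x)]
    exact eq_comm
  ext b
  rw [parts_eq_image_part (kerP f), parts_eq_image_part Q, funext hpart]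

lemma exists_kerP (Q : Finpartition (Finset.univ : Finset α)) (hQ : Q.parts.card ≤ n) :
    ∃ f : α → Fin n, kerP f = Q := by
  have hne : Nonempty ({B // B ∈ Q.parts} ↪ Fin n) := by
    apply Function.Embedding.nonempty_of_card_le
    simpa [Fintype.card_coe] using hQ
  obtain ⟨e⟩ := hne
  refine ⟨fun x => e ⟨Q.part x, Q.part_mem.2 (mem_univ x)⟩, kerP_eq_of_rel_part fun x y => ?_⟩
  constructor
  · intro h
    exact congrArg Subtype.val (e.injective h)
  · intro h
    exact congrArg e (Subtype.ext h)

lemma exists_perm_comp {f g : α → Fin n} (h : ∀ x y, f x = f y ↔ g x = g y) :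
    ∃ σ : Equiv.Perm (Fin n), f = ⇑σ ∘ g := by
  set s : Finset (Fin n) := univ.image g with hs
  set t : Finset (Fin n) := univ.image f with ht
  have hmem : ∀ x : α, g x ∈ s := fun x => mem_image_of_mem g (mem_univ x)
  have hmemf : ∀ x : α, f x ∈ t := fun x => mem_image_of_mem f (mem_univ x)
  have pick : ∀ c : {c // c ∈ s}, ∃ a : α, g a = c.1 := by
    rintro ⟨c, hc⟩
    obtain ⟨a, -, ha⟩ := mem_image.1 hc
    exact ⟨a, ha⟩
  choose w hw using pick
  let e : {c // c ∈ s} → {d // d ∈ t} := fun c => ⟨f (w c), hmemf _⟩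
  have he : ∀ (x : α) (hx : g x ∈ s), e ⟨g x, hx⟩ = ⟨f x, hmemf x⟩ := by
    intro x hx
    exact Subtype.ext ((h _ _).2 (hw ⟨g x, hx⟩))
  have hinj : Function.Injective e := by
    rintro ⟨c, hc⟩ ⟨c', hc'⟩ hcc
    have h1 : f (w ⟨c, hc⟩) = f (w ⟨c', hc'⟩) := congrArg Subtype.val hcc
    have h2 := (h _ _).1 h1
    exact Subtype.ext (by rw [← hw ⟨c, hc⟩, ← hw ⟨c', hc'⟩, h2])
  have hsurj : Function.Surjective e := by
    rintro ⟨d, hd⟩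
    obtain ⟨a, -, rfl⟩ := mem_image.1 hd
    exact ⟨⟨g a, hmem a⟩, he a (hmem a)⟩
  let e1 : {c // c ∈ s} ≃ {d // d ∈ t} := Equiv.ofBijective e ⟨hinj, hsurj⟩
  have hcard : Fintype.card {c // ¬ c ∈ s} = Fintype.card {d // ¬ d ∈ t} := by
    have hc1 : Fintype.card {c // c ∈ s} = Fintype.card {d // d ∈ t} :=
      Fintype.card_congr e1
    rw [Fintype.card_subtype_compl, Fintype.card_subtype_compl, hc1]
  let e2 : {c // ¬ c ∈ s} ≃ {d // ¬ d ∈ t} := Fintype.equivOfCardEq hcard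
  refine ⟨(Equiv.sumCompl (· ∈ s)).symm.trans ((e1.sumCongr e2).trans
    (Equiv.sumCompl (· ∈ t))), ?_⟩
  funext x
  simp only [Function.comp_apply, Equiv.trans_apply]
  rw [Equiv.sumCompl_symm_apply_of_pos (hmem x)]
  have : (e1.sumCongr e2) (Sum.inl ⟨g x, hmem x⟩) = Sum.inl (e1 ⟨g x, hmem x⟩) := rfl
  rw [this]
  have he1 : e1 ⟨g x, hmem x⟩ = ⟨f x, hmemf x⟩ := he x (hmem x)
  rw [he1, Equiv.sumCompl_apply_inl]

end DiagramBasisAux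

namespace DiagramBasisMain

open Finset DiagramBasisAux

variable (n k l : ℕ)

/-- Index type: partitions with at most `n` parts. -/
abbrev ι := {P : Finpartition (Finset.univ : Finset (Fin (l + k))) // P.parts.card ≤ n}

/-- The indicator matrix of a kernel partition. -/
noncomputable def Efam (Q : ι n k l) : Matrix (Fin l → Fin n) (Fin k → Fin n) ℝ :=
  Matrix.of fun I J => if kerP (Fin.append I J) = Q.1 then 1 else 0

noncomputable def Bfam (P : ι n k l) : Matrix (Fin l → Fin n) (Fin k → Fin n) ℝ :=
  diagramMatrix n k l P.1

lemma append_self {β : Type*} (f : Fin (l + k) → β) :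
    Fin.append (fun i => f (Fin.castAdd k i)) (fun j => f (Fin.natAdd l j)) = f := by
  funext x
  refine Fin.addCases (fun i => ?_) (fun j => ?_) x
  · rw [Fin.append_left]
  · rw [Fin.append_right]

lemma comp_append {β γ : Type*} (φ : β → γ) (I : Fin l → β) (J : Fin k → β) :
    Fin.append (φ ∘ I) (φ ∘ J) = φ ∘ Fin.append I J := by
  funext x
  refine Fin.addCases (fun i => ?_) (fun j => ?_) x
  · simp [Fin.append_left]
  · simp [Fin.append_right]

lemma Bfam_apply (P : ι n k l) (I : Fin l → Fin n) (J : Fin k → Fin n) :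
    Bfam n k l P I J = if P.1 ≤ kerP (Fin.append I J) then 1 else 0 := by
  simp only [Bfam, diagramMatrix, Matrix.of_apply]
  exact if_congr const_iff_le rfl rfl

lemma sum_smul_Efam_apply (c : ι n k l → ℝ) (I : Fin l → Fin n) (J : Fin k → Fin n) :
    (∑ Q : ι n k l, c Q • Efam n k l Q) I J
      = c ⟨kerP (Fin.append I J), card_kerP _⟩ := by
  rw [Matrix.sum_apply]
  rw [Finset.sum_eq_single (⟨kerP (Fin.append I J), card_kerP _⟩ : ι n k l)]
  · simp [Efam]
  · intro Q _ hQ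
    have : ¬ (kerP (Fin.append I J) = Q.1) := by
      intro hc
      exact hQ (Subtype.ext hc.symm)
    simp [Efam, this]
  · intro h
    exact absurd (Finset.mem_univ _) h

lemma Bfam_eq_sum (P : ι n k l) :
    Bfam n k l P
      = ∑ Q : ι n k l, (if P.1 ≤ Q.1 then (1 : ℝ) else 0) • Efam n k l Q := by
  ext I J
  rw [sum_smul_Efam_apply, Bfam_apply]

lemma Efam_mem_span (P : ι n k l) :
    Efam n k l P ∈ Submodule.span ℝ (Set.range (Bfam n k l)) := by
  induction P using WellFounded.induction (r := (· > ·))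
    (wellFounded_gt (α := ι n k l)) with
  | _ P IH =>
    have hsplit : Bfam n k l P
        = (if P.1 ≤ P.1 then (1 : ℝ) else 0) • Efam n k l P
          + ∑ Q ∈ (Finset.univ.erase P),
              (if P.1 ≤ Q.1 then (1 : ℝ) else 0) • Efam n k l Q := by
      rw [Bfam_eq_sum]
      exact (Finset.add_sum_erase _
        (fun Q => (if P.1 ≤ Q.1 then (1 : ℝ) else 0) • Efam n k l Q)
        (Finset.mem_univ P)).symm
    rw [if_pos le_rfl, one_smul] at hsplit
    have hE : Efam n k l P
        = Bfam n k l P - ∑ Q ∈ (Finset.univ.erase P),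
            (if P.1 ≤ Q.1 then (1 : ℝ) else 0) • Efam n k l Q := by
      rw [hsplit]; abel
    rw [hE]
    refine Submodule.sub_mem _ (Submodule.subset_span ⟨P, rfl⟩) ?_
    refine Submodule.sum_mem _ fun Q hQ => ?_
    by_cases hle : P.1 ≤ Q.1
    · have hne : P ≠ Q := fun hc => (Finset.ne_of_mem_erase hQ) hc.symm
      have hlt : P < Q := lt_of_le_of_ne (Subtype.coe_le_coe.1 hle) hne
      exact Submodule.smul_mem _ _ (IH Q hlt)
    · rw [if_neg hle, zero_smul]
      exact Submodule.zero_mem _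

lemma exists_rep (Q : ι n k l) :
    ∃ p : (Fin l → Fin n) × (Fin k → Fin n), kerP (Fin.append p.1 p.2) = Q.1 := by
  obtain ⟨f, hf⟩ := exists_kerP Q.1 Q.2
  exact ⟨⟨fun i => f (Fin.castAdd k i), fun j => f (Fin.natAdd l j)⟩, by
    rw [append_self]; exact hf⟩

/-- A chosen pair `(I,J)` whose kernel partition is `Q`. -/
noncomputable def rep (Q : ι n k l) : (Fin l → Fin n) × (Fin k → Fin n) :=
  (exists_rep n k l Q).choose

lemma rep_spec (Q : ι n k l) :
    kerP (Fin.append (rep n k l Q).1 (rep n k l Q).2) = Q.1 :=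
  (exists_rep n k l Q).choose_spec

lemma Efam_linearIndependent : LinearIndependent ℝ (Efam n k l) := by
  rw [linearIndependent_iff']
  intro s g hsum Q hQ
  have h0 : (∑ i ∈ s, g i • Efam n k l i) (rep n k l Q).1 (rep n k l Q).2 = 0 := by
    rw [hsum]; rfl
  rw [Matrix.sum_apply] at h0
  rw [Finset.sum_eq_single_of_mem Q hQ] at h0
  · simpa [Efam, rep_spec] using h0
  · intro j _ hj
    have : ¬ (kerP (Fin.append (rep n k l Q).1 (rep n k l Q).2) = j.1) := by
      rw [rep_spec]
      exact fun hc => hj (Subtype.ext hc.symm)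
    simp [Efam, this]

lemma span_eq :
    Submodule.span ℝ (Set.range (Efam n k l))
      = Submodule.span ℝ (Set.range (Bfam n k l)) := by
  apply le_antisymm
  · rw [Submodule.span_le]
    rintro _ ⟨Q, rfl⟩
    exact Efam_mem_span n k l Q
  · rw [Submodule.span_le]
    rintro _ ⟨P, rfl⟩
    rw [Bfam_eq_sum]
    exact Submodule.sum_mem _ fun Q _ =>
      Submodule.smul_mem _ _ (Submodule.subset_span ⟨Q, rfl⟩)

lemma Bfam_linearIndependent : LinearIndependent ℝ (Bfam n k l) := by
  rw [linearIndependent_iff_card_eq_finrank_span]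
  have h1 : Fintype.card (ι n k l) = (Set.range (Efam n k l)).finrank ℝ :=
    linearIndependent_iff_card_eq_finrank_span.1 (Efam_linearIndependent n k l)
  rw [h1, Set.finrank, Set.finrank, span_eq]

lemma equivariant_of_mem_span (M : Matrix (Fin l → Fin n) (Fin k → Fin n) ℝ)
    (hM : M ∈ Submodule.span ℝ (Set.range (Bfam n k l)))
    (σ : Equiv.Perm (Fin n)) (I : Fin l → Fin n) (J : Fin k → Fin n) :
    M (⇑σ ∘ I) (⇑σ ∘ J) = M I J := by
  let S : Submodule ℝ (Matrix (Fin l → Fin n) (Fin k → Fin n) ℝ) :=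
    { carrier := {M | ∀ (σ : Equiv.Perm (Fin n)) (I : Fin l → Fin n)
        (J : Fin k → Fin n), M (⇑σ ∘ I) (⇑σ ∘ J) = M I J}
      add_mem' := by
        intro a b ha hb σ I J
        rw [Matrix.add_apply, Matrix.add_apply, ha σ I J, hb σ I J]
      zero_mem' := by intro σ I J; rfl
      smul_mem' := by
        intro c a ha σ I J
        rw [Matrix.smul_apply, Matrix.smul_apply, ha σ I J] }
  have hsub : Set.range (Bfam n k l) ⊆ S := by
    rintro _ ⟨P, rfl⟩
    intro σ I J
    rw [Bfam_apply, Bfam_apply, comp_append]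
    have hker : kerP (⇑σ ∘ Fin.append I J) = kerP (Fin.append I J) :=
      kerP_eq_of_rel fun x y => σ.injective.eq_iff
    rw [hker]
  exact (Submodule.span_le.2 hsub) hM σ I J

lemma mem_span_of_equivariant (M : Matrix (Fin l → Fin n) (Fin k → Fin n) ℝ)
    (hM : ∀ (σ : Equiv.Perm (Fin n)) (I : Fin l → Fin n) (J : Fin k → Fin n),
      M (⇑σ ∘ I) (⇑σ ∘ J) = M I J) :
    M ∈ Submodule.span ℝ (Set.range (Bfam n k l)) := by
  have hdecomp : M = ∑ Q : ι n k l, (M (rep n k l Q).1 (rep n k l Q).2) • Efam n k l Q := by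
    ext I J
    rw [sum_smul_Efam_apply]
    set R : ι n k l := ⟨kerP (Fin.append I J), card_kerP _⟩ with hR
    have hker : kerP (Fin.append I J) = kerP (Fin.append (rep n k l R).1 (rep n k l R).2) := by
      rw [rep_spec]
    obtain ⟨σ, hσ⟩ := exists_perm_comp (rel_of_kerP_eq hker)
    have hI : I = ⇑σ ∘ (rep n k l R).1 := by
      funext i
      have := congrFun hσ (Fin.castAdd k i)
      simpa [Fin.append_left] using this
    have hJ : J = ⇑σ ∘ (rep n k l R).2 := by
      funext j
      have := congrFun hσ (Fin.natAdd l j)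
      simpa [Fin.append_right] using this
    rw [hI, hJ, hM σ (rep n k l R).1 (rep n k l R).2]
  rw [← span_eq, hdecomp]
  exact Submodule.sum_mem _ fun Q _ =>
    Submodule.smul_mem _ _ (Submodule.subset_span ⟨Q, rfl⟩)

end DiagramBasisMain

/-- The matrices `B_P`, as `P` ranges over set partitions of
`Fin (l+k)` with at most `n` blocks, form a basis of the space of
`S_n`-equivariant matrices: they are linearly independent, and a matrix is
`S_n`-equivariant exactly when it lies in their span. -/
theorem diagram_basis
    (n k l : ℕ) :
    LinearIndependent ℝ
      (fun P : {P : Finpartition (Finset.univ : Finset (Fin (l + k))) //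
          P.parts.card ≤ n} => diagramMatrix n k l P.1) ∧
    ∀ M : Matrix (Fin l → Fin n) (Fin k → Fin n) ℝ,
      (∀ (σ : Equiv.Perm (Fin n)) (I : Fin l → Fin n) (J : Fin k → Fin n),
          M (⇑σ ∘ I) (⇑σ ∘ J) = M I J) ↔
      M ∈ Submodule.span ℝ
        (Set.range (fun P : {P : Finpartition (Finset.univ : Finset (Fin (l + k))) //
            P.parts.card ≤ n} => diagramMatrix n k l P.1)) := by
  refine ⟨DiagramBasisMain.Bfam_linearIndependent n k l, fun M => ⟨?_, ?_⟩⟩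
  · exact DiagramBasisMain.mem_span_of_equivariant n k l M
  · exact DiagramBasisMain.equivariant_of_mem_span n k l M
end

section
/- Let G be a graph on n vertices and let l ≥ 0. A real vector c indexed by functions I : Fin l → Fin n satisfies c (σ ∘ I) = c I for all σ ∈ Aut(G) and all I (i.e., c is a fixed vector of the permutation representation of Aut(G) on the l-th tensor power of ℝ^n) if and only if c lies in the ℝ-linear span of the set of G-homomorphism matrices X_𝐇^G of (0,l)-bilabelled graphs 𝐇 = (H, ∅, 𝐥), regarded as vectors indexed by (Fin l → Fin n). -/
open Finset

theorem aux18_card_split {α : Type} [Finite α] (P Q : α → Prop) :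
    Nat.card {x // P x} = Nat.card {x // P x ∧ Q x} + Nat.card {x // P x ∧ ¬ Q x} := by
  classical
  cases nonempty_fintype α
  simp only [Nat.card_eq_fintype_card, Fintype.card_subtype]
  rw [← Finset.card_filter_add_card_filter_not (s := univ.filter P) (p := Q)]
  congr 1 <;> rw [Finset.filter_filter]

def aux18_homSet (n l : ℕ) (adjG : Fin n → Fin n → Prop) : Set ((Fin l → Fin n) → ℝ) :=
  {v | ∃ (m : ℕ) (adjH : Fin m → Fin m → Prop),
      (∀ u v, adjH u v → adjH v u) ∧
      ∃ lt : Fin l → Fin m,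
        v = fun I => (Nat.card {φ : Fin m → Fin n //
          (∀ u v, adjH u v → adjG (φ u) (φ v)) ∧ φ ∘ lt = I} : ℝ)}

noncomputable def aux18_homVecD (n l m : ℕ) (adjG : Fin n → Fin n → Prop)
    (adjH : Fin m → Fin m → Prop)
    (lt : Fin l → Fin m) (D : Finset (Fin m × Fin m)) : (Fin l → Fin n) → ℝ :=
  fun I => (Nat.card {φ : Fin m → Fin n //
      (∀ u v, adjH u v → adjG (φ u) (φ v)) ∧ φ ∘ lt = I ∧
      ∀ p ∈ D, φ p.1 ≠ φ p.2} : ℝ)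

theorem aux18_genMem (n l m : ℕ) (adjG : Fin n → Fin n → Prop) (adjH : Fin m → Fin m → Prop)
    (hsym : ∀ u v, adjH u v → adjH v u) (lt : Fin l → Fin m) :
    aux18_homVecD n l m adjG adjH lt ∅ ∈ aux18_homSet n l adjG := by
  refine ⟨m, adjH, hsym, lt, funext fun I => ?_⟩
  unfold aux18_homVecD
  rw [Nat.card_congr (Equiv.subtypeEquivRight (q := fun φ =>
    (∀ u v, adjH u v → adjG (φ u) (φ v)) ∧ φ ∘ lt = I) fun φ => by simp)]

theorem aux18_aux18_homVecD_mem (n l : ℕ) (hn : 0 < n) (adjG : Fin n → Fin n → Prop) (k : ℕ) :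
    ∀ (m : ℕ) (adjH : Fin m → Fin m → Prop), (∀ u v, adjH u v → adjH v u) →
    ∀ (lt : Fin l → Fin m) (D : Finset (Fin m × Fin m)), D.card ≤ k →
    aux18_homVecD n l m adjG adjH lt D ∈ Submodule.span ℝ (aux18_homSet n l adjG) := by
  induction k with
  | zero =>
    intro m adjH hsym lt D hD
    rw [Nat.le_zero, Finset.card_eq_zero] at hD
    subst hD
    exact Submodule.subset_span (aux18_genMem n l m adjG adjH hsym lt)
  | succ k ih =>
    intro m adjH hsym lt D hD
    rcases D.eq_empty_or_nonempty with rfl | ⟨⟨u, v⟩, huv⟩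
    · exact Submodule.subset_span (aux18_genMem n l m adjG adjH hsym lt)
    by_cases huv2 : u = v
    · subst huv2
      have hz : aux18_homVecD n l m adjG adjH lt D = 0 := by
        funext I
        haveI : IsEmpty {φ : Fin m → Fin n //
            (∀ u' v', adjH u' v' → adjG (φ u') (φ v')) ∧ φ ∘ lt = I ∧
            ∀ p ∈ D, φ p.1 ≠ φ p.2} :=
          ⟨fun ⟨φ, h⟩ => (h.2.2 (u, u) huv rfl).elim⟩
        simp only [aux18_homVecD, Nat.card_of_isEmpty, Nat.cast_zero, Pi.zero_apply]
      rw [hz]; exact Submodule.zero_mem _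
    · set D₀ := D.erase (u, v) with hD₀
      set r : Fin m → Fin m := fun x => if x = v then u else x with hr
      have hru : r u = u := by simp [hr, huv2]
      have hrv : r v = u := by simp [hr]
      have hrx : ∀ x, x ≠ v → r x = x := fun x hx => by simp [hr, hx]
      set adjH'' : Fin m → Fin m → Prop :=
        fun a b => ∃ a' b', adjH a' b' ∧ r a' = a ∧ r b' = b with hadj''
      have hsym'' : ∀ a b, adjH'' a b → adjH'' b a := by
        rintro a b ⟨a', b', h1, h2, h3⟩
        exact ⟨b', a', hsym _ _ h1, h3, h2⟩
      set D'' := D₀.image (fun p => (r p.1, r p.2)) with hD''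
      have key_update : ∀ (φ : Fin m → Fin n) (cc : Fin n), φ u = φ v →
          Function.update φ v cc ∘ r = φ := by
        intro φ cc hφ
        funext x
        by_cases hx : x = v
        · subst hx
          rw [Function.comp_apply, hrv, Function.update_of_ne huv2, hφ]
        · rw [Function.comp_apply, hrx x hx, Function.update_of_ne hx]
      have hDall : ∀ φ : Fin m → Fin n,
          (∀ p ∈ D, φ p.1 ≠ φ p.2) ↔
            (∀ p ∈ D₀, φ p.1 ≠ φ p.2) ∧ φ u ≠ φ v := by
        intro φ
        constructor
        · exact fun h => ⟨fun p hp => h p (Finset.mem_of_mem_erase hp), h _ huv⟩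
        · rintro ⟨h1, h2⟩ p hp
          by_cases hpe : p = (u, v)
          · subst hpe; exact h2
          · exact h1 p (Finset.mem_erase.mpr ⟨hpe, hp⟩)
      have key : ∀ I : Fin l → Fin n,
          aux18_homVecD n l m adjG adjH lt D I
            = aux18_homVecD n l m adjG adjH lt D₀ I
              - (n : ℝ)⁻¹ * aux18_homVecD n l m adjG adjH'' (r ∘ lt) D'' I := by
        intro I
        set P : (Fin m → Fin n) → Prop := fun φ =>
          (∀ a b, adjH a b → adjG (φ a) (φ b)) ∧ φ ∘ lt = I ∧
            ∀ p ∈ D₀, φ p.1 ≠ φ p.2 with hP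
        set Q : (Fin m → Fin n) → Prop := fun φ => φ u ≠ φ v with hQ
        have e : {ψ : Fin m → Fin n //
              (∀ a b, adjH'' a b → adjG (ψ a) (ψ b)) ∧ ψ ∘ (r ∘ lt) = I ∧
              ∀ p ∈ D'', ψ p.1 ≠ ψ p.2}
            ≃ {φ : Fin m → Fin n // P φ ∧ ¬ Q φ} × Fin n := by
          refine ⟨fun ψp => ⟨⟨ψp.1 ∘ r, ?_⟩, ψp.1 v⟩,
              fun pc => ⟨Function.update pc.1.1 v pc.2, ?_⟩, ?_, ?_⟩
          · obtain ⟨ψ, h1, h2, h3⟩ := ψp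
            refine ⟨⟨fun a b hab => h1 (r a) (r b) ⟨a, b, hab, rfl, rfl⟩,
                funext fun x => congrFun h2 x, fun p hp =>
                  h3 (r p.1, r p.2) (Finset.mem_image.mpr ⟨p, hp, rfl⟩)⟩, ?_⟩
            rw [hQ, not_not]
            show ψ (r u) = ψ (r v)
            rw [hru, hrv]
          · obtain ⟨⟨φ, ⟨g1, g2, g3⟩, g4⟩, cc⟩ := pc
            rw [hQ, not_not] at g4
            have hcr : Function.update φ v cc ∘ r = φ := key_update φ cc g4
            refine ⟨?_, ?_, ?_⟩
            · rintro a b ⟨a', b', hab, rfl, rfl⟩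
              have e1 : Function.update φ v cc (r a') = φ a' := congrFun hcr a'
              have e2 : Function.update φ v cc (r b') = φ b' := congrFun hcr b'
              rw [e1, e2]
              exact g1 a' b' hab
            · funext x
              have e1 : Function.update φ v cc (r (lt x)) = φ (lt x) := congrFun hcr (lt x)
              show Function.update φ v cc (r (lt x)) = I x
              rw [e1]
              exact congrFun g2 x
            · intro p hp
              obtain ⟨q, hq, rfl⟩ := Finset.mem_image.mp hp
              have e1 : Function.update φ v cc (r q.1) = φ q.1 := congrFun hcr q.1
              have e2 : Function.update φ v cc (r q.2) = φ q.2 := congrFun hcr q.2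
              show Function.update φ v cc (r q.1) ≠ Function.update φ v cc (r q.2)
              rw [e1, e2]
              exact g3 q hq
          · rintro ⟨ψ, hψ⟩
            apply Subtype.ext
            funext x
            by_cases hx : x = v
            · subst hx; simp
            · show Function.update (ψ ∘ r) v (ψ v) x = ψ x
              rw [Function.update_of_ne hx, Function.comp_apply, hrx x hx]
          · rintro ⟨⟨φ, hφ, g4⟩, cc⟩
            rw [hQ, not_not] at g4
            refine Prod.ext (Subtype.ext ?_) ?_
            · exact key_update φ cc g4
            · simp
        have h1 : Nat.card {ψ : Fin m → Fin n //
              (∀ a b, adjH'' a b → adjG (ψ a) (ψ b)) ∧ ψ ∘ (r ∘ lt) = I ∧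
              ∀ p ∈ D'', ψ p.1 ≠ ψ p.2}
            = Nat.card {φ : Fin m → Fin n // P φ ∧ ¬ Q φ} * n := by
          rw [Nat.card_congr e, Nat.card_prod]
          congr 1
          rw [Nat.card_eq_fintype_card, Fintype.card_fin]
        have h2 : Nat.card {φ : Fin m → Fin n // P φ}
            = Nat.card {φ : Fin m → Fin n // P φ ∧ Q φ}
              + Nat.card {φ : Fin m → Fin n // P φ ∧ ¬ Q φ} := aux18_card_split P Q
        have h3 : Nat.card {φ : Fin m → Fin n //
              (∀ a b, adjH a b → adjG (φ a) (φ b)) ∧ φ ∘ lt = I ∧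
              ∀ p ∈ D, φ p.1 ≠ φ p.2}
            = Nat.card {φ : Fin m → Fin n // P φ ∧ Q φ} :=
          Nat.card_congr (Equiv.subtypeEquivRight fun φ => by
            rw [hP, hQ]
            have := hDall φ
            tauto)
        have h4 : aux18_homVecD n l m adjG adjH lt D₀ I
            = (Nat.card {φ : Fin m → Fin n // P φ} : ℝ) := rfl
        have h5 : aux18_homVecD n l m adjG adjH lt D I
            = (Nat.card {φ : Fin m → Fin n // P φ ∧ Q φ} : ℝ) := by
          rw [aux18_homVecD, h3]
        have h6 : aux18_homVecD n l m adjG adjH'' (r ∘ lt) D'' I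
            = ((Nat.card {φ : Fin m → Fin n // P φ ∧ ¬ Q φ} * n : ℕ) : ℝ) := by
          rw [aux18_homVecD, h1]
        rw [h4, h5, h6, h2]
        have hn' : (n : ℝ) ≠ 0 := Nat.cast_ne_zero.mpr hn.ne'
        push_cast
        field_simp
        ring
      have hfun : aux18_homVecD n l m adjG adjH lt D
          = aux18_homVecD n l m adjG adjH lt D₀
            - (n : ℝ)⁻¹ • aux18_homVecD n l m adjG adjH'' (r ∘ lt) D'' := by
        funext I
        rw [Pi.sub_apply, Pi.smul_apply, smul_eq_mul]
        exact key I
      have hc0 : D₀.card ≤ k := by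
        rw [hD₀, Finset.card_erase_of_mem huv]
        omega
      have hc2 : D''.card ≤ k :=
        le_trans (le_trans Finset.card_image_le le_rfl) hc0
      rw [hfun]
      exact Submodule.sub_mem _ (ih m adjH hsym lt D₀ hc0)
        (Submodule.smul_mem _ _ (ih m adjH'' hsym'' (r ∘ lt) D'' hc2))

theorem aux18_adj_iff (n : ℕ) (adjG : Fin n → Fin n → Prop) (φ : Fin n → Fin n)
    (hinj : Function.Injective φ) (hhom : ∀ i j, adjG i j → adjG (φ i) (φ j)) :
    ∀ i j, adjG i j ↔ adjG (φ i) (φ j) := by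
  intro i j
  refine ⟨hhom i j, fun h => ?_⟩
  set E : Set (Fin n × Fin n) := {p | adjG p.1 p.2} with hE
  have hinj2 : Function.Injective (Prod.map φ φ) := hinj.prodMap hinj
  have hsub : (Prod.map φ φ) '' E ⊆ E := by
    rintro ⟨a, b⟩ ⟨⟨x, y⟩, hxy, h2⟩
    rw [Prod.map_apply, Prod.mk.injEq] at h2
    rw [← h2.1, ← h2.2]
    exact hhom x y hxy
  have heq : (Prod.map φ φ) '' E = E := by
    apply Set.eq_of_subset_of_ncard_le hsub
    rw [Set.ncard_image_of_injective _ hinj2]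
  have hm : (φ i, φ j) ∈ E := h
  rw [← heq] at hm
  obtain ⟨⟨a, b⟩, hab, h2⟩ := hm
  rw [Prod.map_apply, Prod.mk.injEq] at h2
  rwa [← hinj h2.1, ← hinj h2.2]


theorem aux18_inj_card (n l : ℕ) (adjG : Fin n → Fin n → Prop) (I₀ I : Fin l → Fin n) :
    Nat.card {φ : Fin n → Fin n //
        (∀ u v, adjG u v → adjG (φ u) (φ v)) ∧ φ ∘ I₀ = I ∧
        ∀ p ∈ Finset.univ.filter (fun p : Fin n × Fin n => p.1 ≠ p.2), φ p.1 ≠ φ p.2}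
      = Nat.card {σ : Equiv.Perm (Fin n) //
        (∀ i j, adjG i j ↔ adjG (σ i) (σ j)) ∧ ⇑σ ∘ I₀ = I} := by
  apply Nat.card_congr
  have hinj : ∀ φp : {φ : Fin n → Fin n //
      (∀ u v, adjG u v → adjG (φ u) (φ v)) ∧ φ ∘ I₀ = I ∧
      ∀ p ∈ Finset.univ.filter (fun p : Fin n × Fin n => p.1 ≠ p.2), φ p.1 ≠ φ p.2},
      Function.Injective φp.1 := by
    rintro ⟨φ, h1, h2, h3⟩ a b hab
    by_contra hne
    exact h3 (a, b) (Finset.mem_filter.mpr ⟨Finset.mem_univ _, hne⟩) hab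
  refine ⟨fun φp => ⟨Equiv.ofBijective φp.1
      (Finite.injective_iff_bijective.mp (hinj φp)),
      aux18_adj_iff n adjG φp.1 (hinj φp) φp.2.1, φp.2.2.1⟩,
    fun σp => ⟨⇑σp.1, fun u v h => (σp.2.1 u v).mp h, σp.2.2,
      fun p hp h => (Finset.mem_filter.mp hp).2 (σp.1.injective h)⟩, ?_, ?_⟩
  · intro φp
    exact Subtype.ext rfl
  · intro σp
    exact Subtype.ext (Equiv.ext fun x => rfl)


/-- A vector `c` indexed by `Fin l → Fin n` is fixed by the
permutation action of `Aut(G)` if and only if it lies in the ℝ-linear span of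
the `G`-homomorphism matrices (regarded as vectors) of `(0,l)`-bilabelled
graphs `(H, ∅, lt)` with `H` a graph on `Fin m` for some `m`. -/
theorem invariant_iff_mem_span_homVectors
    (n l : ℕ) (adjG : Fin n → Fin n → Prop)
    (hG : ∀ i j, adjG i j → adjG j i)
    (c : (Fin l → Fin n) → ℝ) :
    (∀ σ : Equiv.Perm (Fin n), (∀ i j, adjG i j ↔ adjG (σ i) (σ j)) →
      ∀ I : Fin l → Fin n, c (⇑σ ∘ I) = c I) ↔
    c ∈ Submodule.span ℝ
      {v : (Fin l → Fin n) → ℝ |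
        ∃ (m : ℕ) (adjH : Fin m → Fin m → Prop),
          (∀ u v, adjH u v → adjH v u) ∧
          ∃ lt : Fin l → Fin m,
            v = fun I => (Nat.card {φ : Fin m → Fin n //
              (∀ u v, adjH u v → adjG (φ u) (φ v)) ∧ φ ∘ lt = I} : ℝ)} := by
  classical
  constructor
  · -- hard direction
    intro hinv
    show c ∈ Submodule.span ℝ (aux18_homSet n l adjG)
    rcases Nat.eq_zero_or_pos n with rfl | hn
    · rcases Nat.eq_zero_or_pos l with rfl | hl
      · -- n = 0, l = 0 : constant vector argument
        have hone : (fun _ : Fin 0 → Fin 0 => (1 : ℝ)) ∈ aux18_homSet 0 0 adjG := by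
          refine ⟨0, fun _ _ => False, fun u => u.elim0, fun x => x.elim0, funext fun I => ?_⟩
          haveI : Unique {φ : Fin 0 → Fin 0 //
              (∀ u v, False → adjG (φ u) (φ v)) ∧ φ ∘ (fun x : Fin 0 => x.elim0) = I} :=
            ⟨⟨⟨fun x => x.elim0, fun u => u.elim0, funext fun x => x.elim0⟩⟩,
              fun a => Subtype.ext (funext fun x => x.elim0)⟩
          rw [Nat.card_unique, Nat.cast_one]
        have : c = c (fun x : Fin 0 => x.elim0) • (fun _ : Fin 0 → Fin 0 => (1 : ℝ)) := by
          funext I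
          rw [Pi.smul_apply, smul_eq_mul, mul_one]
          congr 1
          funext x
          exact x.elim0
        rw [this]
        exact Submodule.smul_mem _ _ (Submodule.subset_span hone)
      · -- n = 0, l > 0 : c = 0
        have : c = 0 := funext fun I => (I ⟨0, hl⟩).elim0
        rw [this]
        exact Submodule.zero_mem _
    · -- main case
      set Dfull := Finset.univ.filter (fun p : Fin n × Fin n => p.1 ≠ p.2) with hDfull
      set autP : Equiv.Perm (Fin n) → Prop :=
        fun σ => ∀ i j, adjG i j ↔ adjG (σ i) (σ j) with hautP
      set N : ℕ := Nat.card {σ : Equiv.Perm (Fin n) // autP σ} with hN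
      have hNpos : 0 < N := by
        haveI : Nonempty {σ : Equiv.Perm (Fin n) // autP σ} :=
          ⟨⟨1, fun i j => by simp [hautP]⟩⟩
        rw [hN]
        exact Nat.card_pos
      have hval : ∀ I₀ I : Fin l → Fin n,
          aux18_homVecD n l n adjG adjG I₀ Dfull I
            = ((Finset.univ.filter (fun σ : Equiv.Perm (Fin n) =>
                autP σ ∧ ⇑σ ∘ I₀ = I)).card : ℝ) := by
        intro I₀ I
        rw [aux18_homVecD, aux18_inj_card n l adjG I₀ I]
        congr 1
        rw [Nat.card_eq_fintype_card, Fintype.card_subtype]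
      have hNne : (N : ℝ) ≠ 0 := Nat.cast_ne_zero.mpr hNpos.ne'
      have hkey : c = ∑ I₀ : Fin l → Fin n,
          (c I₀ / N) • aux18_homVecD n l n adjG adjG I₀ Dfull := by
        funext I
        rw [Finset.sum_apply]
        have step1 : ∀ I₀ : Fin l → Fin n,
            ((c I₀ / N) • aux18_homVecD n l n adjG adjG I₀ Dfull) I
              = ∑ σ : Equiv.Perm (Fin n),
                  (if autP σ ∧ ⇑σ ∘ I₀ = I then c I₀ / N else 0) := by
          intro I₀
          rw [Pi.smul_apply, smul_eq_mul, hval I₀ I, Finset.card_filter]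
          push_cast
          rw [Finset.mul_sum]
          apply Finset.sum_congr rfl
          intro σ _
          by_cases h : autP σ ∧ ⇑σ ∘ I₀ = I <;> simp [h]
        simp_rw [step1]
        rw [Finset.sum_comm]
        have inner : ∀ σ : Equiv.Perm (Fin n),
            (∑ I₀ : Fin l → Fin n, if autP σ ∧ ⇑σ ∘ I₀ = I then c I₀ / N else 0)
              = if autP σ then c I / N else 0 := by
          intro σ
          by_cases hA : autP σ
          · rw [if_pos hA]
            have hiff : ∀ I₀ : Fin l → Fin n,
                (autP σ ∧ ⇑σ ∘ I₀ = I) ↔ I₀ = ⇑σ⁻¹ ∘ I := by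
              intro I₀
              constructor
              · rintro ⟨-, h⟩
                funext x
                rw [← h]
                simp
              · rintro rfl
                exact ⟨hA, funext fun x => by simp⟩
            simp_rw [hiff]
            rw [Finset.sum_ite_eq' Finset.univ (⇑σ⁻¹ ∘ I) (fun I₀ => c I₀ / N),
              if_pos (Finset.mem_univ _)]
            have hA' : autP σ⁻¹ := by
              intro i j
              have h2 := hA (σ⁻¹ i) (σ⁻¹ j)
              simp only [Equiv.Perm.coe_inv, Equiv.apply_symm_apply] at h2
              exact h2.symm
            rw [hinv σ⁻¹ hA' I]
          · simp [hA]
        simp_rw [inner]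
        rw [← Finset.sum_filter, Finset.sum_const, nsmul_eq_mul]
        have hcard : (Finset.univ.filter autP).card = N := by
          rw [hN, Nat.card_eq_fintype_card, Fintype.card_subtype]
        rw [hcard]
        field_simp
      rw [hkey]
      exact Submodule.sum_mem _ fun I₀ _ => Submodule.smul_mem _ _
        (aux18_aux18_homVecD_mem n l hn adjG Dfull.card n adjG hG I₀ Dfull le_rfl)
  · -- easy direction
    intro hc σ hσ I
    refine Submodule.span_induction ?_ ?_ ?_ ?_ hc
    · rintro v ⟨m, adjH, hsym, lt, rfl⟩
      show (Nat.card _ : ℝ) = _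
      congr 1
      apply Nat.card_congr
      refine ⟨fun φp => ⟨⇑σ⁻¹ ∘ φp.1, fun u v h => ?_, funext fun x => ?_⟩,
          fun ψp => ⟨⇑σ ∘ ψp.1, fun u v h => ?_, funext fun x => ?_⟩, ?_, ?_⟩
      · have := φp.2.1 u v h
        have h2 := (hσ (σ⁻¹ (φp.1 u)) (σ⁻¹ (φp.1 v))).mpr
        simp only [Equiv.Perm.coe_inv, Equiv.apply_symm_apply] at h2
        exact h2 this
      · show σ⁻¹ (φp.1 (lt x)) = I x
        have := congrFun φp.2.2 x
        simp only [Function.comp_apply] at this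
        rw [this]
        simp
      · exact (hσ (ψp.1 u) (ψp.1 v)).mp (ψp.2.1 u v h)
      · show σ (ψp.1 (lt x)) = (⇑σ ∘ I) x
        have := congrFun ψp.2.2 x
        simp only [Function.comp_apply] at this
        rw [this]
        rfl
      · intro φp
        apply Subtype.ext
        funext x
        show σ (σ⁻¹ (φp.1 x)) = φp.1 x
        simp
      · intro ψp
        apply Subtype.ext
        funext x
        show σ⁻¹ (σ (ψp.1 x)) = ψp.1 x
        simp
    · rfl
    · intro x y _ _ hx hy
      simp only [Pi.add_apply, hx, hy]
    · intro a x _ hx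
      simp only [Pi.smul_apply, hx]
end

section
/- Let G be a graph on n vertices, let k, l ≥ 0, and let d_k, d_l ≥ 1 be feature dimensions. A real matrix M with rows indexed by pairs (I, i) with I : Fin l → Fin n and i ∈ Fin d_l, and columns indexed by pairs (J, j) with J : Fin k → Fin n and j ∈ Fin d_k, satisfies M (σ ∘ I, i) (σ ∘ J, j) = M (I, i) (J, j) for all σ ∈ Aut(G) and all I, i, J, j if and only if M lies in the ℝ-linear span of the matrices X_{𝐇,i,j}^G, where 𝐇 ranges over all (k,l)-bilabelled graphs, i ∈ Fin d_l, j ∈ Fin d_k, and X_{𝐇,i,j}^G has ((I, i'), (J, j'))-entry equal to (X_𝐇^G) I J if i' = i and j' = j, and 0 otherwise. -/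
noncomputable def cMat (n : ℕ) (adjG : Fin n → Fin n → Prop)
    {V : Type} [Fintype V] (adjH : V → V → Prop) (L : List (V × V))
    {k l : ℕ} (kt : Fin k → V) (lt : Fin l → V) :
    Matrix (Fin l → Fin n) (Fin k → Fin n) ℝ :=
  Matrix.of fun I J =>
    (Nat.card {φ : V → Fin n //
      (∀ u v, adjH u v → adjG (φ u) (φ v)) ∧ (∀ p ∈ L, φ p.1 ≠ φ p.2) ∧
        φ ∘ lt = I ∧ φ ∘ kt = J} : ℝ)

def mrg {V : Type} [DecidableEq V] (a b : V) (hab : a ≠ b) : V → {x : V // x ≠ b} :=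
  fun x => if h : x = b then ⟨a, hab⟩ else ⟨x, h⟩

lemma comp_mrg {V : Type} [DecidableEq V] {a b : V} (hab : a ≠ b)
    {α : Type*} {φ : V → α} (hφ : φ a = φ b) (x : V) :
    φ (mrg a b hab x).1 = φ x := by
  unfold mrg
  split
  · simp_all
  · rfl

lemma mrg_ne {V : Type} [DecidableEq V] {a b : V} (hab : a ≠ b) (x : {x : V // x ≠ b}) :
    mrg a b hab x.1 = x := by
  unfold mrg
  rw [dif_neg x.2]

lemma card_split {α : Type*} [Finite α] (p q : α → Prop) :
    Nat.card {x // p x} = Nat.card {x // p x ∧ q x} + Nat.card {x // p x ∧ ¬ q x} := by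
  classical
  rw [← Nat.card_sum]
  exact Nat.card_congr ((Equiv.sumCongr
    (Equiv.subtypeSubtypeEquivSubtypeInter p q).symm
    (Equiv.subtypeSubtypeEquivSubtypeInter p (fun x => ¬ q x)).symm).trans
    (Equiv.sumCompl _)).symm

lemma cMat_split (n : ℕ) (adjG : Fin n → Fin n → Prop)
    {V : Type} [Fintype V] [DecidableEq V] (adjH : V → V → Prop)
    (a b : V) (hab : a ≠ b) (L : List (V × V))
    {k l : ℕ} (kt : Fin k → V) (lt : Fin l → V) :
    cMat n adjG adjH ((a,b) :: L) kt lt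
      = cMat n adjG adjH L kt lt
        - cMat n adjG
            (fun u v => ∃ u' v', adjH u' v' ∧ mrg a b hab u' = u ∧ mrg a b hab v' = v)
            (L.map fun p => (mrg a b hab p.1, mrg a b hab p.2))
            (mrg a b hab ∘ kt) (mrg a b hab ∘ lt) := by
  ext I J
  simp only [cMat, Matrix.of_apply, Matrix.sub_apply]
  rw [eq_sub_iff_add_eq]
  have key : Nat.card {φ : V → Fin n //
        (∀ u v, adjH u v → adjG (φ u) (φ v)) ∧ (∀ p ∈ (a,b) :: L, φ p.1 ≠ φ p.2) ∧
          φ ∘ lt = I ∧ φ ∘ kt = J}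
      + Nat.card {ψ : {x : V // x ≠ b} → Fin n //
        (∀ u v, (∃ u' v', adjH u' v' ∧ mrg a b hab u' = u ∧ mrg a b hab v' = v) →
            adjG (ψ u) (ψ v)) ∧
          (∀ p ∈ L.map fun p => (mrg a b hab p.1, mrg a b hab p.2), ψ p.1 ≠ ψ p.2) ∧
          ψ ∘ (mrg a b hab ∘ lt) = I ∧ ψ ∘ (mrg a b hab ∘ kt) = J}
      = Nat.card {φ : V → Fin n //
        (∀ u v, adjH u v → adjG (φ u) (φ v)) ∧ (∀ p ∈ L, φ p.1 ≠ φ p.2) ∧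
          φ ∘ lt = I ∧ φ ∘ kt = J} := by
    rw [card_split (fun φ : V → Fin n =>
        (∀ u v, adjH u v → adjG (φ u) (φ v)) ∧ (∀ p ∈ L, φ p.1 ≠ φ p.2) ∧
          φ ∘ lt = I ∧ φ ∘ kt = J) (fun φ => φ a ≠ φ b)]
    congr 1
    · apply Nat.card_congr
      apply Equiv.subtypeEquivRight
      intro φ
      simp only [List.forall_mem_cons]
      tauto
    · apply Nat.card_congr
      refine Equiv.symm ⟨?_, ?_, ?_, ?_⟩
      · rintro ⟨φ, ⟨h1, h2, h3, h4⟩, h5⟩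
        rw [not_not] at h5
        refine ⟨fun x => φ x.1, ?_, ?_, ?_, ?_⟩
        · rintro u v ⟨u', v', huv, rfl, rfl⟩
          show adjG (φ (mrg a b hab u').1) (φ (mrg a b hab v').1)
          rw [comp_mrg hab h5, comp_mrg hab h5]
          exact h1 _ _ huv
        · intro p hp
          rw [List.mem_map] at hp
          obtain ⟨q, hq, rfl⟩ := hp
          show φ (mrg a b hab q.1).1 ≠ φ (mrg a b hab q.2).1
          rw [comp_mrg hab h5, comp_mrg hab h5]
          exact h2 q hq
        · funext x
          show φ (mrg a b hab (lt x)).1 = I x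
          rw [comp_mrg hab h5]
          exact congrFun h3 x
        · funext x
          show φ (mrg a b hab (kt x)).1 = J x
          rw [comp_mrg hab h5]
          exact congrFun h4 x
      · rintro ⟨ψ, h1, h2, h3, h4⟩
        refine ⟨fun x => ψ (mrg a b hab x), ⟨?_, ?_, ?_, ?_⟩, ?_⟩
        · intro u v huv
          exact h1 _ _ ⟨u, v, huv, rfl, rfl⟩
        · intro p hp
          exact h2 (mrg a b hab p.1, mrg a b hab p.2) (List.mem_map.2 ⟨p, hp, rfl⟩)
        · funext x
          exact congrFun h3 x
        · funext x
          exact congrFun h4 x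
        · rw [not_not]
          have ha : mrg a b hab a = ⟨a, hab⟩ := by unfold mrg; rw [dif_neg hab]
          have hb : mrg a b hab b = ⟨a, hab⟩ := by unfold mrg; rw [dif_pos rfl]
          show ψ (mrg a b hab a) = ψ (mrg a b hab b)
          rw [ha, hb]
      · rintro ⟨φ, ⟨h1, h2, h3, h4⟩, h5⟩
        rw [not_not] at h5
        apply Subtype.ext
        funext x
        exact comp_mrg hab h5 x
      · rintro ⟨ψ, h1, h2, h3, h4⟩
        apply Subtype.ext
        funext x
        show ψ (mrg a b hab x.1) = ψ x
        rw [mrg_ne hab]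
  exact_mod_cast congrArg (fun x : ℕ => (x : ℝ)) key


/-- The span of all hom matrices of (k,l)-bilabelled graphs. -/
noncomputable def homSpan (n : ℕ) (adjG : Fin n → Fin n → Prop) (k l : ℕ) :
    Submodule ℝ (Matrix (Fin l → Fin n) (Fin k → Fin n) ℝ) :=
  Submodule.span ℝ {N | ∃ (m : ℕ) (adjH : Fin m → Fin m → Prop),
    (∀ u v, adjH u v → adjH v u) ∧
    ∃ (kt : Fin k → Fin m) (lt : Fin l → Fin m), N = homMatrix n adjG adjH kt lt}

lemma cMat_nil_mem (n : ℕ) (adjG : Fin n → Fin n → Prop)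
    {V : Type} [Fintype V] (adjH : V → V → Prop)
    (hsym : ∀ u v, adjH u v → adjH v u)
    {k l : ℕ} (kt : Fin k → V) (lt : Fin l → V) :
    cMat n adjG adjH [] kt lt ∈ homSpan n adjG k l := by
  apply Submodule.subset_span
  set e := Fintype.equivFin V with he
  refine ⟨Fintype.card V, fun u v => adjH (e.symm u) (e.symm v),
    fun u v h => hsym _ _ h, e ∘ kt, e ∘ lt, ?_⟩
  ext I J
  simp only [cMat, homMatrix, Matrix.of_apply]
  congr 1
  refine Nat.card_congr (Equiv.subtypeEquiv (e.arrowCongr (Equiv.refl (Fin n))) ?_)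
  intro φ
  constructor
  · rintro ⟨h1, -, h3, h4⟩
    refine ⟨fun u v h => ?_, ?_, ?_⟩
    · simpa using h1 _ _ h
    · funext x; simpa using congrFun h3 x
    · funext x; simpa using congrFun h4 x
  · rintro ⟨h1, h3, h4⟩
    refine ⟨fun u v h => ?_, by simp, ?_, ?_⟩
    · have := h1 (e u) (e v)
      simp only [Equiv.symm_apply_apply] at this
      simpa using this h
    · funext x; simpa using congrFun h3 x
    · funext x; simpa using congrFun h4 x

lemma cMat_mem (n : ℕ) (adjG : Fin n → Fin n → Prop) (k l : ℕ) :
    ∀ (N : ℕ) (V : Type) [Fintype V], Fintype.card V ≤ N →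
    ∀ (adjH : V → V → Prop), (∀ u v, adjH u v → adjH v u) →
    ∀ (L : List (V × V)) (kt : Fin k → V) (lt : Fin l → V),
    cMat n adjG adjH L kt lt ∈ homSpan n adjG k l := by
  intro N
  induction N with
  | zero =>
    intro V _ hc adjH hs L kt lt
    cases L with
    | nil => exact cMat_nil_mem n adjG adjH hs kt lt
    | cons p L' =>
      have : IsEmpty V := Fintype.card_eq_zero_iff.mp (Nat.le_zero.mp hc)
      exact (this.false p.1).elim
  | succ N ih =>
    intro V _ hc adjH hs L kt lt
    induction L with
    | nil => exact cMat_nil_mem n adjG adjH hs kt lt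
    | cons p L' ihL =>
      obtain ⟨a, b⟩ := p
      classical
      by_cases hab : a = b
      · subst hab
        have hz : cMat n adjG adjH ((a, a) :: L') kt lt = 0 := by
          ext I J
          simp only [cMat, Matrix.of_apply, Matrix.zero_apply]
          norm_cast
          rw [Nat.card_eq_zero]
          left
          exact ⟨fun x => x.2.2.1 (a, a) List.mem_cons_self rfl⟩
        rw [hz]
        exact zero_mem _
      · rw [cMat_split n adjG adjH a b hab L' kt lt]
        refine sub_mem ihL (ih {x : V // x ≠ b} ?_ _ ?_ _ _ _)
        · have h1 : Fintype.card {x : V // x ≠ b} = Fintype.card V - 1 := by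
            rw [Fintype.card_subtype_compl, Fintype.card_subtype_eq]
          have h2 : 1 ≤ Fintype.card V := Fintype.card_pos_iff.mpr ⟨b⟩
          omega
        · rintro u v ⟨u', v', huv, h1, h2⟩
          exact ⟨v', u', hs _ _ huv, h2, h1⟩

lemma inj_hom_reflect {n : ℕ} {adjG : Fin n → Fin n → Prop} (φ : Fin n → Fin n)
    (hinj : Function.Injective φ)
    (hhom : ∀ u v, adjG u v → adjG (φ u) (φ v)) :
    ∀ a b, adjG (φ a) (φ b) → adjG a b := by
  classical
  set F : {p : Fin n × Fin n // adjG p.1 p.2} → {p : Fin n × Fin n // adjG p.1 p.2} :=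
    fun p => ⟨(φ p.1.1, φ p.1.2), hhom _ _ p.2⟩ with hF
  have hFinj : Function.Injective F := by
    rintro ⟨⟨u, v⟩, h⟩ ⟨⟨u', v'⟩, h'⟩ hh
    simp only [hF, Subtype.mk.injEq, Prod.mk.injEq] at hh
    exact Subtype.ext (Prod.ext (hinj hh.1) (hinj hh.2))
  have hFsurj : Function.Surjective F := (Finite.injective_iff_surjective).mp hFinj
  intro a b hab
  obtain ⟨⟨⟨u, v⟩, huv⟩, he⟩ := hFsurj ⟨(φ a, φ b), hab⟩
  simp only [hF, Subtype.mk.injEq, Prod.mk.injEq] at he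
  rwa [← hinj he.1, ← hinj he.2]

noncomputable def autMat (n : ℕ) (adjG : Fin n → Fin n → Prop) {k l : ℕ}
    (I₀ : Fin l → Fin n) (J₀ : Fin k → Fin n) :
    Matrix (Fin l → Fin n) (Fin k → Fin n) ℝ :=
  Matrix.of fun I J =>
    (Nat.card {σ : Equiv.Perm (Fin n) //
      (∀ i j, adjG i j ↔ adjG (σ i) (σ j)) ∧ ⇑σ ∘ I₀ = I ∧ ⇑σ ∘ J₀ = J} : ℝ)

lemma autMat_mem (n : ℕ) (adjG : Fin n → Fin n → Prop)
    (hG : ∀ i j, adjG i j → adjG j i) {k l : ℕ}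
    (I₀ : Fin l → Fin n) (J₀ : Fin k → Fin n) :
    autMat n adjG I₀ J₀ ∈ homSpan n adjG k l := by
  classical
  set Lall : List (Fin n × Fin n) :=
    ((Finset.univ : Finset (Fin n × Fin n)).filter (fun p => p.1 ≠ p.2)).toList with hLall
  have hmem : ∀ p : Fin n × Fin n, p ∈ Lall ↔ p.1 ≠ p.2 := by
    intro p
    simp [hLall]
  have key : autMat n adjG I₀ J₀ = cMat n adjG adjG Lall J₀ I₀ := by
    ext I J
    simp only [autMat, cMat, Matrix.of_apply]
    congr 1
    refine Nat.card_congr ⟨?_, ?_, ?_, ?_⟩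
    · rintro ⟨σ, h1, h2, h3⟩
      refine ⟨⇑σ, fun u v h => (h1 u v).mp h, ?_, h2, h3⟩
      intro p hp he
      exact (hmem p).mp hp (σ.injective he)
    · rintro ⟨φ, h1, h2, h3, h4⟩
      have hinj : Function.Injective φ := by
        intro x y hxy
        by_contra hne
        exact h2 (x, y) ((hmem _).mpr hne) hxy
      refine ⟨Equiv.ofBijective φ (Finite.injective_iff_bijective.mp hinj),
        fun i j => ⟨fun h => h1 _ _ h, fun h => inj_hom_reflect φ hinj h1 i j h⟩, h3, h4⟩
    · rintro ⟨σ, h1, h2, h3⟩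
      apply Subtype.ext
      apply Equiv.ext
      intro x
      rfl
    · rintro ⟨φ, h1, h2, h3, h4⟩
      rfl
  rw [key]
  exact cMat_mem n adjG k l n (Fin n) (by simp) adjG hG Lall J₀ I₀

noncomputable def blockMap (n k l dk dl : ℕ) (i : Fin dl) (j : Fin dk) :
    Matrix (Fin l → Fin n) (Fin k → Fin n) ℝ →ₗ[ℝ]
      Matrix ((Fin l → Fin n) × Fin dl) ((Fin k → Fin n) × Fin dk) ℝ where
  toFun N := Matrix.of fun p q => if p.2 = i ∧ q.2 = j then N p.1 q.1 else 0
  map_add' N N' := by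
    ext p q
    simp only [Matrix.of_apply, Matrix.add_apply]
    split <;> simp
  map_smul' a N := by
    ext p q
    simp only [Matrix.of_apply, Matrix.smul_apply, RingHom.id_apply, smul_eq_mul]
    split <;> simp

lemma homMatrix_equivariant (n : ℕ) (adjG : Fin n → Fin n → Prop)
    {V : Type} [Fintype V] (adjH : V → V → Prop)
    {k l : ℕ} (kt : Fin k → V) (lt : Fin l → V)
    (σ : Equiv.Perm (Fin n)) (hσ : ∀ i j, adjG i j ↔ adjG (σ i) (σ j))
    (I : Fin l → Fin n) (J : Fin k → Fin n) :
    homMatrix n adjG adjH kt lt (⇑σ ∘ I) (⇑σ ∘ J) = homMatrix n adjG adjH kt lt I J := by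
  simp only [homMatrix, Matrix.of_apply]
  congr 1
  refine Nat.card_congr (Equiv.subtypeEquiv ((Equiv.refl V).arrowCongr σ) ?_).symm
  intro φ
  constructor
  · rintro ⟨h1, h2, h3⟩
    refine ⟨fun u v h => ?_, ?_, ?_⟩
    · show adjG (σ (φ u)) (σ (φ v))
      exact (hσ _ _).mp (h1 u v h)
    · funext x
      show σ (φ (lt x)) = σ (I x)
      exact congrArg σ (congrFun h2 x)
    · funext x
      show σ (φ (kt x)) = σ (J x)
      exact congrArg σ (congrFun h3 x)
  · rintro ⟨h1, h2, h3⟩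
    refine ⟨fun u v h => ?_, ?_, ?_⟩
    · have := h1 u v h
      exact (hσ _ _).mpr this
    · funext x
      exact σ.injective (congrFun h2 x)
    · funext x
      exact σ.injective (congrFun h3 x)

lemma card_subtype_real (α : Type*) [Fintype α] (p : α → Prop) [DecidablePred p] :
    (Nat.card {x // p x} : ℝ) = ∑ x : α, if p x then (1 : ℝ) else 0 := by
  rw [Nat.card_eq_fintype_card, Fintype.card_subtype, Finset.card_filter]
  push_cast
  simp

lemma sum_aut (n k l dk dl : ℕ) (adjG : Fin n → Fin n → Prop)
    (M : Matrix ((Fin l → Fin n) × Fin dl) ((Fin k → Fin n) × Fin dk) ℝ)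
    (hM : ∀ σ : Equiv.Perm (Fin n), (∀ i j, adjG i j ↔ adjG (σ i) (σ j)) →
      ∀ (I : Fin l → Fin n) (i : Fin dl) (J : Fin k → Fin n) (j : Fin dk),
        M (⇑σ ∘ I, i) (⇑σ ∘ J, j) = M (I, i) (J, j))
    (I : Fin l → Fin n) (J : Fin k → Fin n) (i' : Fin dl) (j' : Fin dk) :
    ∑ I₀ : Fin l → Fin n, ∑ J₀ : Fin k → Fin n,
      M (I₀, i') (J₀, j') * autMat n adjG I₀ J₀ I J
    = (Nat.card {σ : Equiv.Perm (Fin n) // ∀ a b, adjG a b ↔ adjG (σ a) (σ b)} : ℝ)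
        * M (I, i') (J, j') := by
  classical
  have step1 : ∑ I₀ : Fin l → Fin n, ∑ J₀ : Fin k → Fin n,
      M (I₀, i') (J₀, j') * autMat n adjG I₀ J₀ I J
      = ∑ I₀ : Fin l → Fin n, ∑ J₀ : Fin k → Fin n, ∑ σ : Equiv.Perm (Fin n),
        (if (∀ a b, adjG a b ↔ adjG (σ a) (σ b)) ∧ ⇑σ ∘ I₀ = I ∧ ⇑σ ∘ J₀ = J
          then M (I₀, i') (J₀, j') else 0) := by
    refine Finset.sum_congr rfl fun I₀ _ => Finset.sum_congr rfl fun J₀ _ => ?_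
    rw [show autMat n adjG I₀ J₀ I J
        = (Nat.card {σ : Equiv.Perm (Fin n) //
            (∀ a b, adjG a b ↔ adjG (σ a) (σ b)) ∧ ⇑σ ∘ I₀ = I ∧ ⇑σ ∘ J₀ = J} : ℝ) from rfl,
      card_subtype_real, Finset.mul_sum]
    exact Finset.sum_congr rfl fun σ _ => by split <;> simp
  rw [step1]
  have step2 : ∑ I₀ : Fin l → Fin n, ∑ J₀ : Fin k → Fin n, ∑ σ : Equiv.Perm (Fin n),
      (if (∀ a b, adjG a b ↔ adjG (σ a) (σ b)) ∧ ⇑σ ∘ I₀ = I ∧ ⇑σ ∘ J₀ = J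
        then M (I₀, i') (J₀, j') else 0)
      = ∑ σ : Equiv.Perm (Fin n), ∑ I₀ : Fin l → Fin n, ∑ J₀ : Fin k → Fin n,
        (if (∀ a b, adjG a b ↔ adjG (σ a) (σ b)) ∧ ⇑σ ∘ I₀ = I ∧ ⇑σ ∘ J₀ = J
          then M (I₀, i') (J₀, j') else 0) := by
    rw [Finset.sum_congr rfl fun I₀ (_ : I₀ ∈ Finset.univ) => (Finset.sum_comm : _ = ∑ σ : Equiv.Perm (Fin n), ∑ J₀ : Fin k → Fin n, _)]
    exact Finset.sum_comm
  rw [step2]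
  have step3 : ∀ σ : Equiv.Perm (Fin n),
      (∑ I₀ : Fin l → Fin n, ∑ J₀ : Fin k → Fin n,
        (if (∀ a b, adjG a b ↔ adjG (σ a) (σ b)) ∧ ⇑σ ∘ I₀ = I ∧ ⇑σ ∘ J₀ = J
          then M (I₀, i') (J₀, j') else 0))
      = if (∀ a b, adjG a b ↔ adjG (σ a) (σ b)) then M (I, i') (J, j') else 0 := by
    intro σ
    by_cases hσ : ∀ a b, adjG a b ↔ adjG (σ a) (σ b)
    · have hcond : ∀ (I₀ : Fin l → Fin n) (J₀ : Fin k → Fin n),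
          ((∀ a b, adjG a b ↔ adjG (σ a) (σ b)) ∧ ⇑σ ∘ I₀ = I ∧ ⇑σ ∘ J₀ = J)
          ↔ (I₀ = ⇑σ.symm ∘ I ∧ J₀ = ⇑σ.symm ∘ J) := by
        intro I₀ J₀
        constructor
        · rintro ⟨-, h2, h3⟩
          constructor
          · funext x
            exact (Equiv.eq_symm_apply σ).mpr (congrFun h2 x)
          · funext x
            exact (Equiv.eq_symm_apply σ).mpr (congrFun h3 x)
        · rintro ⟨rfl, rfl⟩
          refine ⟨hσ, ?_, ?_⟩
          · funext x
            exact σ.apply_symm_apply (I x)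
          · funext x
            exact σ.apply_symm_apply (J x)
      simp only [hcond, ite_and]
      rw [if_pos hσ]
      rw [Finset.sum_eq_single (⇑σ.symm ∘ I)]
      · rw [Finset.sum_eq_single (⇑σ.symm ∘ J)]
        · rw [if_pos rfl, if_pos rfl]
          have := hM σ hσ (⇑σ.symm ∘ I) i' (⇑σ.symm ∘ J) j'
          have hI : ⇑σ ∘ (⇑σ.symm ∘ I) = I := by
            funext x
            exact σ.apply_symm_apply (I x)
          have hJ : ⇑σ ∘ (⇑σ.symm ∘ J) = J := by
            funext x
            exact σ.apply_symm_apply (J x)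
          rw [hI, hJ] at this
          exact this.symm
        · intro b _ hb
          rw [if_pos rfl, if_neg hb]
        · intro h
          exact absurd (Finset.mem_univ _) h
      · intro b _ hb
        simp [hb]
      · intro h
        exact absurd (Finset.mem_univ _) h
    · simp [hσ]
  rw [Finset.sum_congr rfl fun σ _ => step3 σ]
  rw [card_subtype_real, Finset.sum_mul]
  exact Finset.sum_congr rfl fun σ _ => by split <;> simp

lemma sum_ite_const {β : Type*} [AddCommMonoid β] {ι : Type*} [Fintype ι]
    (P : Prop) [Decidable P] (f : ι → β) :
    (∑ x : ι, if P then f x else 0) = if P then ∑ x : ι, f x else 0 := by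
  split <;> simp

lemma sum_sum_ite {β : Type*} [AddCommMonoid β] {dl dk : ℕ} (i' : Fin dl) (j' : Fin dk)
    (g : Fin dl → Fin dk → β) :
    (∑ i : Fin dl, ∑ j : Fin dk, if i' = i ∧ j' = j then g i j else 0) = g i' j' := by
  classical
  rw [Finset.sum_eq_single i']
  · rw [Finset.sum_eq_single j']
    · rw [if_pos ⟨rfl, rfl⟩]
    · intro b _ hb
      rw [if_neg (fun h => hb h.2.symm)]
    · intro h
      exact absurd (Finset.mem_univ _) h
  · intro b _ hb
    exact Finset.sum_eq_zero fun j _ => if_neg (fun h => hb h.1.symm)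
  · intro h
    exact absurd (Finset.mem_univ _) h

/-- With feature dimensions `d_k, d_l ≥ 1`, a matrix `M` with
rows indexed by pairs `(I, i)` (`I : Fin l → Fin n`, `i : Fin d_l`) and columns
indexed by pairs `(J, j)` is `Aut(G)`-equivariant (acting on tuple indices and
trivially on feature indices) if and only if it lies in the ℝ-linear span of
the matrices `X_{𝐇,i,j}` obtained by placing the `G`-homomorphism matrix of a
`(k,l)`-bilabelled graph `𝐇` in the feature block `(i, j)` and `0` elsewhere. -/
theorem equivariant_with_features_iff_mem_span
    (n k l dk dl : ℕ) (hdk : 1 ≤ dk) (hdl : 1 ≤ dl)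
    (adjG : Fin n → Fin n → Prop)
    (hG : ∀ i j, adjG i j → adjG j i)
    (M : Matrix ((Fin l → Fin n) × Fin dl) ((Fin k → Fin n) × Fin dk) ℝ) :
    (∀ σ : Equiv.Perm (Fin n), (∀ i j, adjG i j ↔ adjG (σ i) (σ j)) →
      ∀ (I : Fin l → Fin n) (i : Fin dl) (J : Fin k → Fin n) (j : Fin dk),
        M (⇑σ ∘ I, i) (⇑σ ∘ J, j) = M (I, i) (J, j)) ↔
    M ∈ Submodule.span ℝ
      {X : Matrix ((Fin l → Fin n) × Fin dl) ((Fin k → Fin n) × Fin dk) ℝ |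
        ∃ (m : ℕ) (adjH : Fin m → Fin m → Prop),
          (∀ u v, adjH u v → adjH v u) ∧
          ∃ (kt : Fin k → Fin m) (lt : Fin l → Fin m) (i : Fin dl) (j : Fin dk),
            X = Matrix.of fun p q =>
              if p.2 = i ∧ q.2 = j then homMatrix n adjG adjH kt lt p.1 q.1
              else 0} := by
  classical
  constructor
  · intro hM
    have hne : Nonempty {σ : Equiv.Perm (Fin n) // ∀ a b, adjG a b ↔ adjG (σ a) (σ b)} :=
      ⟨⟨Equiv.refl _, fun a b => Iff.rfl⟩⟩
    set c : ℝ :=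
      (Nat.card {σ : Equiv.Perm (Fin n) // ∀ a b, adjG a b ↔ adjG (σ a) (σ b)} : ℝ) with hcdef
    have hcpos : (0 : ℝ) < c := by
      rw [hcdef]
      exact_mod_cast Nat.card_pos
    have key : M = ∑ i : Fin dl, ∑ j : Fin dk, ∑ I₀ : Fin l → Fin n, ∑ J₀ : Fin k → Fin n,
        (M (I₀, i) (J₀, j) / c) • (blockMap n k l dk dl i j (autMat n adjG I₀ J₀)) := by
      ext ⟨I, i'⟩ ⟨J, j'⟩
      simp only [Matrix.sum_apply, Matrix.smul_apply, smul_eq_mul]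
      have hbm : ∀ (i : Fin dl) (j : Fin dk) (I₀ : Fin l → Fin n) (J₀ : Fin k → Fin n),
          blockMap n k l dk dl i j (autMat n adjG I₀ J₀) (I, i') (J, j')
            = if i' = i ∧ j' = j then autMat n adjG I₀ J₀ I J else 0 := fun _ _ _ _ => rfl
      symm
      calc ∑ i : Fin dl, ∑ j : Fin dk, ∑ I₀ : Fin l → Fin n, ∑ J₀ : Fin k → Fin n,
              (M (I₀, i) (J₀, j) / c) *
                (blockMap n k l dk dl i j (autMat n adjG I₀ J₀) (I, i') (J, j'))
          = ∑ i : Fin dl, ∑ j : Fin dk, if i' = i ∧ j' = j then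
              (∑ I₀ : Fin l → Fin n, ∑ J₀ : Fin k → Fin n,
                (M (I₀, i) (J₀, j) / c) * autMat n adjG I₀ J₀ I J) else 0 := by
            refine Finset.sum_congr rfl fun i _ => Finset.sum_congr rfl fun j _ => ?_
            rw [Finset.sum_congr rfl fun I₀ (_ : I₀ ∈ Finset.univ) =>
              Finset.sum_congr rfl fun J₀ (_ : J₀ ∈ Finset.univ) =>
                (by rw [hbm, mul_ite, mul_zero] :
                  (M (I₀, i) (J₀, j) / c) *
                    (blockMap n k l dk dl i j (autMat n adjG I₀ J₀) (I, i') (J, j'))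
                  = if i' = i ∧ j' = j then
                      (M (I₀, i) (J₀, j) / c) * autMat n adjG I₀ J₀ I J else 0)]
            rw [Finset.sum_congr rfl fun I₀ (_ : I₀ ∈ Finset.univ) => sum_ite_const _ _,
              sum_ite_const]
        _ = ∑ I₀ : Fin l → Fin n, ∑ J₀ : Fin k → Fin n,
              (M (I₀, i') (J₀, j') / c) * autMat n adjG I₀ J₀ I J := sum_sum_ite i' j' _
        _ = M (I, i') (J, j') := by
            have h1 : ∑ I₀ : Fin l → Fin n, ∑ J₀ : Fin k → Fin n,
                (M (I₀, i') (J₀, j') / c) * autMat n adjG I₀ J₀ I J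
                = (∑ I₀ : Fin l → Fin n, ∑ J₀ : Fin k → Fin n,
                    M (I₀, i') (J₀, j') * autMat n adjG I₀ J₀ I J) / c := by
              rw [Finset.sum_div]
              exact Finset.sum_congr rfl fun I₀ _ => by
                rw [Finset.sum_div]
                exact Finset.sum_congr rfl fun J₀ _ => (div_mul_eq_mul_div _ _ _)
            rw [h1, sum_aut n k l dk dl adjG M hM I J i' j', ← hcdef, mul_comm,
              mul_div_assoc, div_self hcpos.ne', mul_one]
    rw [key]
    refine Submodule.sum_mem _ fun i _ => Submodule.sum_mem _ fun j _ =>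
      Submodule.sum_mem _ fun I₀ _ => Submodule.sum_mem _ fun J₀ _ =>
      Submodule.smul_mem _ _ ?_
    have h1 : autMat n adjG I₀ J₀ ∈ homSpan n adjG k l := autMat_mem n adjG hG I₀ J₀
    have h2 := Submodule.mem_map_of_mem (f := blockMap n k l dk dl i j) h1
    rw [homSpan, Submodule.map_span] at h2
    refine Submodule.span_mono ?_ h2
    rintro X ⟨N, ⟨m, adjH, hs, kt, lt, rfl⟩, rfl⟩
    exact ⟨m, adjH, hs, kt, lt, i, j, rfl⟩
  · intro hM σ hσ I i J j
    induction hM using Submodule.span_induction with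
    | mem X hX =>
      obtain ⟨m, adjH, hs, kt, lt, i₀, j₀, rfl⟩ := hX
      simp only [Matrix.of_apply]
      by_cases h : i = i₀ ∧ j = j₀
      · rw [if_pos h, if_pos h, homMatrix_equivariant n adjG adjH kt lt σ hσ]
      · rw [if_neg h, if_neg h]
    | zero => simp
    | add x y hx hy ihx ihy => simp [Matrix.add_apply, ihx, ihy]
    | smul a x hx ihx => simp [Matrix.smul_apply, ihx]
end
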